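/- Loosened one-shot bound for joint source-channel coding over a MAC: Under the setup of the one-shot Cover–El Gamal–Salehi theorem (source pmf q_{S₁S₂}, channel q_{Y|X₁X₂}, common-part functions k₁, k₂ with K = k₁(S₁) = k₂(S₂) on the support, and joint pmf q(s₁,s₂,t,x₁,x₂,y) = q(s₁,s₂)q(t)q(x₁|s₁,t)q(x₂|s₂,t)q(y|x₁,x₂)), for every γ > 0 there exists a code whose probability of error satisfies P[ ψ(Y) ≠ (S₁,S₂) ] ≤ P_q[ i_q(Y;X₁|X₂,S₂,T) − h_q(S₁|S₂) < γ, or i_q(Y;X₂|X₁,S₁,T) − h_q(S₂|S₁) < γ, or i_q(Y;X₁,X₂|K,T) − h_q(S₁,S₂|K) < γ, or i_q(Y;X₁,X₂) − h_q(S₁,S₂) < γ ] + 4·2^{−γ}. -/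

import Mathlib

open scoped BigOperators

/-- A pmf on a finite type, represented by a nonnegative real-valued function summing to 1. -/
structure FinPMF (α : Type) [Fintype α] where
  p : α → ℝ
  nonneg : ∀ a, 0 ≤ p a
  sum_eq_one : ∑ a, p a = 1

open Classical in
/-- Indicator of a proposition, as a real number. -/
noncomputable def ind (P : Prop) : ℝ := if P then 1 else 0

variable {S1 S2 K T X1 X2 Y : Type}
  [Fintype S1] [Fintype S2] [Fintype K] [Fintype T]
  [Fintype X1] [Fintype X2] [Fintype Y]

/-- The joint pmf
`q(s₁,s₂,t,x₁,x₂,y) = q(s₁,s₂) q(t) q(x₁|s₁,t) q(x₂|s₂,t) q(y|x₁,x₂)`. -/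
noncomputable def qMAC (qS : FinPMF (S1 × S2)) (qT : FinPMF T)
    (qX1 : S1 → T → FinPMF X1) (qX2 : S2 → T → FinPMF X2)
    (Wch : X1 → X2 → FinPMF Y)
    (s1 : S1) (s2 : S2) (t : T) (x1 : X1) (x2 : X2) (y : Y) : ℝ :=
  qS.p (s1, s2) * qT.p t * (qX1 s1 t).p x1 * (qX2 s2 t).p x2 * (Wch x1 x2).p y

noncomputable def mgS1 (qS : FinPMF (S1 × S2)) (s1 : S1) : ℝ :=
  ∑ s2 : S2, qS.p (s1, s2)

noncomputable def mgS2 (qS : FinPMF (S1 × S2)) (s2 : S2) : ℝ :=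
  ∑ s1 : S1, qS.p (s1, s2)

/-- Marginal pmf of the common part `K = k₁(S₁)`. -/
noncomputable def mgK (qS : FinPMF (S1 × S2)) (k1 : S1 → K) (k : K) : ℝ :=
  ∑ s1 : S1, ∑ s2 : S2, ind (k1 s1 = k) * qS.p (s1, s2)

section Marginals

variable (qS : FinPMF (S1 × S2)) (qT : FinPMF T)
  (qX1 : S1 → T → FinPMF X1) (qX2 : S2 → T → FinPMF X2) (Wch : X1 → X2 → FinPMF Y)

noncomputable def mX2S2T (x2 : X2) (s2 : S2) (t : T) : ℝ :=
  ∑ s1 : S1, ∑ x1 : X1, ∑ y : Y, qMAC qS qT qX1 qX2 Wch s1 s2 t x1 x2 y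

noncomputable def mX1X2S2T (x1 : X1) (x2 : X2) (s2 : S2) (t : T) : ℝ :=
  ∑ s1 : S1, ∑ y : Y, qMAC qS qT qX1 qX2 Wch s1 s2 t x1 x2 y

noncomputable def mYX2S2T (y : Y) (x2 : X2) (s2 : S2) (t : T) : ℝ :=
  ∑ s1 : S1, ∑ x1 : X1, qMAC qS qT qX1 qX2 Wch s1 s2 t x1 x2 y

noncomputable def mYX1X2S2T (y : Y) (x1 : X1) (x2 : X2) (s2 : S2) (t : T) : ℝ :=
  ∑ s1 : S1, qMAC qS qT qX1 qX2 Wch s1 s2 t x1 x2 y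

noncomputable def mX1S1T (x1 : X1) (s1 : S1) (t : T) : ℝ :=
  ∑ s2 : S2, ∑ x2 : X2, ∑ y : Y, qMAC qS qT qX1 qX2 Wch s1 s2 t x1 x2 y

noncomputable def mX1X2S1T (x1 : X1) (x2 : X2) (s1 : S1) (t : T) : ℝ :=
  ∑ s2 : S2, ∑ y : Y, qMAC qS qT qX1 qX2 Wch s1 s2 t x1 x2 y

noncomputable def mYX1S1T (y : Y) (x1 : X1) (s1 : S1) (t : T) : ℝ :=
  ∑ s2 : S2, ∑ x2 : X2, qMAC qS qT qX1 qX2 Wch s1 s2 t x1 x2 y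

noncomputable def mYX1X2S1T (y : Y) (x1 : X1) (x2 : X2) (s1 : S1) (t : T) : ℝ :=
  ∑ s2 : S2, qMAC qS qT qX1 qX2 Wch s1 s2 t x1 x2 y

noncomputable def mKT (k1 : S1 → K) (k : K) (t : T) : ℝ :=
  ∑ s1 : S1, ∑ s2 : S2, ∑ x1 : X1, ∑ x2 : X2, ∑ y : Y,
    ind (k1 s1 = k) * qMAC qS qT qX1 qX2 Wch s1 s2 t x1 x2 y

noncomputable def mX1X2KT (k1 : S1 → K) (x1 : X1) (x2 : X2) (k : K) (t : T) : ℝ :=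
  ∑ s1 : S1, ∑ s2 : S2, ∑ y : Y,
    ind (k1 s1 = k) * qMAC qS qT qX1 qX2 Wch s1 s2 t x1 x2 y

noncomputable def mYKT (k1 : S1 → K) (y : Y) (k : K) (t : T) : ℝ :=
  ∑ s1 : S1, ∑ s2 : S2, ∑ x1 : X1, ∑ x2 : X2,
    ind (k1 s1 = k) * qMAC qS qT qX1 qX2 Wch s1 s2 t x1 x2 y

noncomputable def mYX1X2KT (k1 : S1 → K) (y : Y) (x1 : X1) (x2 : X2) (k : K) (t : T) : ℝ :=
  ∑ s1 : S1, ∑ s2 : S2,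
    ind (k1 s1 = k) * qMAC qS qT qX1 qX2 Wch s1 s2 t x1 x2 y

noncomputable def mX1X2 (x1 : X1) (x2 : X2) : ℝ :=
  ∑ s1 : S1, ∑ s2 : S2, ∑ t : T, ∑ y : Y, qMAC qS qT qX1 qX2 Wch s1 s2 t x1 x2 y

noncomputable def mY (y : Y) : ℝ :=
  ∑ s1 : S1, ∑ s2 : S2, ∑ t : T, ∑ x1 : X1, ∑ x2 : X2,
    qMAC qS qT qX1 qX2 Wch s1 s2 t x1 x2 y

noncomputable def mYX1X2 (y : Y) (x1 : X1) (x2 : X2) : ℝ :=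
  ∑ s1 : S1, ∑ s2 : S2, ∑ t : T, qMAC qS qT qX1 qX2 Wch s1 s2 t x1 x2 y

/-- Conditional information `h_q(S₁|S₂)`. -/
noncomputable def hS1cS2 (s1 : S1) (s2 : S2) : ℝ :=
  -Real.logb 2 (qS.p (s1, s2) / mgS2 qS s2)

/-- Conditional information `h_q(S₂|S₁)`. -/
noncomputable def hS2cS1 (s1 : S1) (s2 : S2) : ℝ :=
  -Real.logb 2 (qS.p (s1, s2) / mgS1 qS s1)

/-- Conditional information `h_q(S₁,S₂|K)` evaluated at `k = k₁(s₁)`. -/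
noncomputable def hS1S2cK (k1 : S1 → K) (s1 : S1) (s2 : S2) : ℝ :=
  -Real.logb 2 (qS.p (s1, s2) / mgK qS k1 (k1 s1))

/-- Information `h_q(S₁,S₂)`. -/
noncomputable def hS1S2 (s1 : S1) (s2 : S2) : ℝ :=
  -Real.logb 2 (qS.p (s1, s2))

/-- Conditional information density `i_q(Y;X₁|X₂,S₂,T)`. -/
noncomputable def iYX1cX2S2T (y : Y) (x1 : X1) (x2 : X2) (s2 : S2) (t : T) : ℝ :=
  Real.logb 2 (mYX1X2S2T qS qT qX1 qX2 Wch y x1 x2 s2 t * mX2S2T qS qT qX1 qX2 Wch x2 s2 t /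
    (mYX2S2T qS qT qX1 qX2 Wch y x2 s2 t * mX1X2S2T qS qT qX1 qX2 Wch x1 x2 s2 t))

/-- Conditional information density `i_q(Y;X₂|X₁,S₁,T)`. -/
noncomputable def iYX2cX1S1T (y : Y) (x1 : X1) (x2 : X2) (s1 : S1) (t : T) : ℝ :=
  Real.logb 2 (mYX1X2S1T qS qT qX1 qX2 Wch y x1 x2 s1 t * mX1S1T qS qT qX1 qX2 Wch x1 s1 t /
    (mYX1S1T qS qT qX1 qX2 Wch y x1 s1 t * mX1X2S1T qS qT qX1 qX2 Wch x1 x2 s1 t))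

/-- Conditional information density `i_q(Y;X₁,X₂|K,T)`, evaluated at `k`. -/
noncomputable def iYX1X2cKT (k1 : S1 → K) (y : Y) (x1 : X1) (x2 : X2) (k : K) (t : T) : ℝ :=
  Real.logb 2 (mYX1X2KT qS qT qX1 qX2 Wch k1 y x1 x2 k t * mKT qS qT qX1 qX2 Wch k1 k t /
    (mYKT qS qT qX1 qX2 Wch k1 y k t * mX1X2KT qS qT qX1 qX2 Wch k1 x1 x2 k t))

/-- Information density `i_q(Y;X₁,X₂)`. -/
noncomputable def iYX1X2 (y : Y) (x1 : X1) (x2 : X2) : ℝ :=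
  Real.logb 2 (mYX1X2 qS qT qX1 qX2 Wch y x1 x2 /
    (mX1X2 qS qT qX1 qX2 Wch x1 x2 * mY qS qT qX1 qX2 Wch y))

end Marginals

/-- Probability of erroneous decoding `P[ψ(Y) ≠ (S₁,S₂)]` of a code for lossless
transmission of correlated sources over a MAC. -/
noncomputable def pErrorMAC (qS : FinPMF (S1 × S2)) (Wch : X1 → X2 → FinPMF Y)
    (enc1 : S1 → FinPMF X1) (enc2 : S2 → FinPMF X2)
    (dec : Y → FinPMF (S1 × S2)) : ℝ :=
  ∑ s1 : S1, ∑ s2 : S2, ∑ x1 : X1, ∑ x2 : X2, ∑ y : Y,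
    qS.p (s1, s2) * (enc1 s1).p x1 * (enc2 s2).p x2 * (Wch x1 x2).p y *
      (1 - (dec y).p (s1, s2))

/- ===================== Auxiliary general lemmas ===================== -/

set_option linter.unusedSectionVars false
set_option maxHeartbeats 1000000

section AuxGeneral

lemma ind_nonneg' (P : Prop) : 0 ≤ ind P := by
  unfold ind; split <;> norm_num

lemma ind_le_one' (P : Prop) : ind P ≤ 1 := by
  unfold ind; split <;> norm_num

lemma ind_of_true {P : Prop} (h : P) : ind P = 1 := by simp [ind, h]

lemma ind_of_false {P : Prop} (h : ¬ P) : ind P = 0 := by simp [ind, h]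

lemma sum_ind_collapse {α : Type} [Fintype α] (a : α) (f : α → ℝ) :
    ∑ x, ind (a = x) * f x = f a := by
  classical
  rw [Finset.sum_eq_single a]
  · simp [ind]
  · intro x _ hx; simp [ind, Ne.symm hx]
  · simp

lemma sum_ind_collapse2 {α : Type} [Fintype α] (a : α) (f : α → ℝ) :
    ∑ x, ind (x = a) * f x = f a := by
  classical
  rw [Finset.sum_eq_single a]
  · simp [ind]
  · intro x _ hx; simp [ind, hx]
  · simp

lemma ind_pin {α : Type} (a b : α) (f : α → ℝ) :
    ind (a = b) * f a = ind (a = b) * f b := by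
  by_cases h : a = b
  · rw [h]
  · simp [ind_of_false h]

variable {α β : Type} [Fintype α] [Fintype β] [DecidableEq α] [DecidableEq β]

lemma engine0 (b : α → β → ℝ) (hb : ∀ u, ∑ v, b u v = 1) :
    ∑ c : α → β, ∏ u, b u (c u) = 1 := by
  rw [← Fintype.prod_sum (fun u v => b u v)]
  simp [hb]

lemma engine1 (b : α → β → ℝ) (hb : ∀ u, ∑ v, b u v = 1) (s : α) (F : β → ℝ) :
    ∑ c : α → β, (∏ u, b u (c u)) * F (c s) = ∑ x, b s x * F x := by
  have key : ∀ x : β, ∑ c : α → β,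
      (∏ u, (if u = s then (if c u = x then b u (c u) else 0) else b u (c u))) = b s x := by
    intro x
    rw [← Fintype.prod_sum (fun u v => if u = s then (if v = x then b u v else 0) else b u v)]
    have : ∀ u, (∑ v, if u = s then (if v = x then b u v else 0) else b u v)
        = if u = s then b s x else 1 := by
      intro u
      by_cases h : u = s <;> simp [h, hb]
    rw [Fintype.prod_congr _ _ this, Finset.prod_ite_eq' Finset.univ s (fun _ => b s x)]
    simp
  calc ∑ c : α → β, (∏ u, b u (c u)) * F (c s)
      = ∑ c : α → β, ∑ x,
        (∏ u, (if u = s then (if c u = x then b u (c u) else 0) else b u (c u))) * F x := by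
        refine Finset.sum_congr rfl fun c _ => ?_
        rw [Finset.sum_eq_single (c s)]
        · congr 1
          refine Fintype.prod_congr _ _ fun u => ?_
          by_cases h : u = s <;> simp [h]
        · intro x _ hx
          have : (∏ u, (if u = s then (if c u = x then b u (c u) else 0) else b u (c u))) = 0 := by
            apply Finset.prod_eq_zero (Finset.mem_univ s)
            simp [Ne.symm hx]
          rw [this, zero_mul]
        · simp
    _ = ∑ x, ∑ c : α → β,
        (∏ u, (if u = s then (if c u = x then b u (c u) else 0) else b u (c u))) * F x := by
        rw [Finset.sum_comm]
    _ = ∑ x, b s x * F x := by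
        refine Finset.sum_congr rfl fun x _ => ?_
        rw [← Finset.sum_mul, key]

lemma engine2 (b : α → β → ℝ) (hb : ∀ u, ∑ v, b u v = 1) (s s' : α) (hss : s ≠ s')
    (F : β → β → ℝ) :
    ∑ c : α → β, (∏ u, b u (c u)) * F (c s) (c s')
      = ∑ x, ∑ x', b s x * b s' x' * F x x' := by
  have key : ∀ x x' : β, ∑ c : α → β,
      (∏ u, (if u = s then (if c u = x then b u (c u) else 0) else
             if u = s' then (if c u = x' then b u (c u) else 0) else b u (c u)))
      = b s x * b s' x' := by
    intro x x'
    rw [← Fintype.prod_sum (fun u v => if u = s then (if v = x then b u v else 0) else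
             if u = s' then (if v = x' then b u v else 0) else b u v)]
    have : ∀ u, (∑ v, if u = s then (if v = x then b u v else 0) else
             if u = s' then (if v = x' then b u v else 0) else b u v)
        = (if u = s then b s x else 1) * (if u = s' then b s' x' else 1) := by
      intro u
      by_cases h : u = s
      · subst h
        simp [hss, hb]
      · by_cases h' : u = s' <;> simp [h, h', hb, Ne.symm hss]
    rw [Fintype.prod_congr _ _ this, Finset.prod_mul_distrib,
      Finset.prod_ite_eq' Finset.univ s (fun _ => b s x),
      Finset.prod_ite_eq' Finset.univ s' (fun _ => b s' x')]
    simp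
  calc ∑ c : α → β, (∏ u, b u (c u)) * F (c s) (c s')
      = ∑ c : α → β, ∑ x, ∑ x',
        (∏ u, (if u = s then (if c u = x then b u (c u) else 0) else
             if u = s' then (if c u = x' then b u (c u) else 0) else b u (c u))) * F x x' := by
        refine Finset.sum_congr rfl fun c _ => ?_
        rw [Finset.sum_eq_single (c s)]
        · rw [Finset.sum_eq_single (c s')]
          · congr 1
            refine Fintype.prod_congr _ _ fun u => ?_
            by_cases h : u = s
            · subst h; simp [hss]
            · by_cases h' : u = s' <;> simp [h, h', Ne.symm hss]
          · intro x' _ hx'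
            have : (∏ u, (if u = s then (if c u = c s then b u (c u) else 0) else
                if u = s' then (if c u = x' then b u (c u) else 0) else b u (c u))) = 0 := by
              apply Finset.prod_eq_zero (Finset.mem_univ s')
              simp [Ne.symm hss, Ne.symm hx']
            rw [this, zero_mul]
          · simp
        · intro x _ hx
          have : ∀ x', (∏ u, (if u = s then (if c u = x then b u (c u) else 0) else
              if u = s' then (if c u = x' then b u (c u) else 0) else b u (c u))) = 0 := by
            intro x'
            apply Finset.prod_eq_zero (Finset.mem_univ s)
            simp [Ne.symm hx]
          simp [this]
        · simp
    _ = ∑ x, ∑ x', ∑ c : α → β,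
        (∏ u, (if u = s then (if c u = x then b u (c u) else 0) else
             if u = s' then (if c u = x' then b u (c u) else 0) else b u (c u))) * F x x' := by
        rw [Finset.sum_comm]
        refine Finset.sum_congr rfl fun x _ => Finset.sum_comm
    _ = ∑ x, ∑ x', b s x * b s' x' * F x x' := by
        refine Finset.sum_congr rfl fun x _ => Finset.sum_congr rfl fun x' _ => ?_
        rw [← Finset.sum_mul, key]

lemma exists_le_of_avg_le {ι : Type} [Fintype ι] (w f : ι → ℝ) (hw : ∀ i, 0 ≤ w i)
    (hw1 : ∑ i, w i = 1) (B : ℝ) (h : ∑ i, w i * f i ≤ B) : ∃ i, f i ≤ B := by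
  by_contra hcon
  push_neg at hcon
  have hkey : ∑ i, w i * (f i - B) = (∑ i, w i * f i) - B := by
    have : ∀ i ∈ Finset.univ, w i * (f i - B) = w i * f i - w i * B := fun i _ => by ring
    rw [Finset.sum_congr rfl this, Finset.sum_sub_distrib, ← Finset.sum_mul, hw1, one_mul]
  have h0 : ∑ i, w i * (f i - B) = 0 := by
    have hle : ∑ i, w i * (f i - B) ≤ 0 := by linarith
    have hge : 0 ≤ ∑ i, w i * (f i - B) :=
      Finset.sum_nonneg fun i _ => mul_nonneg (hw i) (by linarith [hcon i])
    linarith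
  have hall := (Finset.sum_eq_zero_iff_of_nonneg
    (fun i _ => mul_nonneg (hw i) (by linarith [hcon i]))).mp h0
  obtain ⟨i, hi⟩ := Finset.exists_ne_zero_of_sum_ne_zero (by rw [hw1]; norm_num : ∑ i, w i ≠ 0)
  have := hall i (Finset.mem_univ i)
  rcases mul_eq_zero.mp this with h1 | h2
  · exact hi.2 h1
  · have := hcon i; linarith

lemma min_add_le' (a b c : ℝ) (hb : 0 ≤ b) (hc : 0 ≤ c) (ha : 0 ≤ a) :
    min a (b + c) ≤ min a b + min a c := by
  have m1 := min_le_left a (b + c)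
  have m2 := min_le_right a (b + c)
  rcases le_total a b with h1 | h1
  · have e1 : min a b = a := min_eq_left h1
    have h2 : 0 ≤ min a c := le_min ha hc
    linarith
  · have e1 : min a b = b := min_eq_right h1
    rcases le_total a c with h2 | h2
    · have e2 : min a c = a := min_eq_left h2
      linarith
    · have e2 : min a c = c := min_eq_right h2
      linarith

lemma sum_min_le' {ι : Type} [Fintype ι] (w : ι → ℝ) (hw : ∀ i, 0 ≤ w i) (A : ℝ) (hA : 0 ≤ A)
    (Λ : ι → ℝ) (m M : ℝ) (hm : ∑ i, w i ≤ m) (hM : ∑ i, w i * Λ i ≤ M) :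
    ∑ i, w i * min A (Λ i) ≤ min (m * A) M := by
  refine le_min ?_ ?_
  · calc ∑ i, w i * min A (Λ i) ≤ ∑ i, w i * A :=
        Finset.sum_le_sum fun i _ => mul_le_mul_of_nonneg_left (min_le_left _ _) (hw i)
      _ = (∑ i, w i) * A := by rw [Finset.sum_mul]
      _ ≤ m * A := mul_le_mul_of_nonneg_right hm hA
  · calc ∑ i, w i * min A (Λ i) ≤ ∑ i, w i * Λ i :=
        Finset.sum_le_sum fun i _ => mul_le_mul_of_nonneg_left (min_le_right _ _) (hw i)
      _ ≤ M := hM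

lemma FinPMF.nonempty {α : Type} [Fintype α] (P : FinPMF α) : Nonempty α := by
  rcases isEmpty_or_nonempty α with he | h
  · exfalso
    have h1 := P.sum_eq_one
    rw [Finset.univ_eq_empty, Finset.sum_empty] at h1
    norm_num at h1
  · exact h

noncomputable def unifPMF (α : Type) [Fintype α] (h : Nonempty α) : FinPMF α :=
  ⟨fun _ => (Fintype.card α : ℝ)⁻¹,
   fun _ => by positivity,
   by
    have hc : (0:ℝ) < Fintype.card α := by
      exact_mod_cast Fintype.card_pos_iff.mpr h
    rw [Finset.sum_const, Finset.card_univ, nsmul_eq_mul]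
    field_simp⟩

noncomputable def diracPMF {α : Type} [Fintype α] [DecidableEq α] (a : α) : FinPMF α :=
  ⟨fun b => if b = a then 1 else 0,
   fun b => by by_cases hb : b = a <;> simp [hb],
   by simp⟩

lemma sum_pmf_mul {β : Type} [Fintype β] (P : FinPMF β) (C : ℝ) : ∑ x, C * P.p x = C := by
  rw [← Finset.mul_sum, P.sum_eq_one, mul_one]

end AuxGeneral

/- ===================== Main development ===================== -/

section MainDev

variable [DecidableEq S1] [DecidableEq S2] [DecidableEq K]
  [DecidableEq T] [DecidableEq X1] [DecidableEq X2]

variable (qS : FinPMF (S1 × S2)) (qT : FinPMF T) (qX1 : S1 → T → FinPMF X1)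
  (qX2 : S2 → T → FinPMF X2) (Wch : X1 → X2 → FinPMF Y) (k1 : S1 → K) (k2 : S2 → K)

/-- Weight of a random codebook: shared `t`-sequence indexed by common part,
codewords generated conditionally i.i.d. -/
noncomputable def OScbW (tb : K → T) (c1 : S1 → X1) (c2 : S2 → X2) : ℝ :=
  (∏ k, qT.p (tb k)) *
    ((∏ s1, (qX1 s1 (tb (k1 s1))).p (c1 s1)) * (∏ s2, (qX2 s2 (tb (k2 s2))).p (c2 s2)))

noncomputable def OSG (c1 : S1 → X1) (c2 : S2 → X2) (p : S1 × S2) (y : Y) : ℝ :=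
  qS.p p * (Wch (c1 p.1) (c2 p.2)).p y

noncomputable def OSZ (c1 : S1 → X1) (c2 : S2 → X2) (y : Y) : ℝ :=
  ∑ p : S1 × S2, OSG qS Wch c1 c2 p y

lemma OSG_nonneg (c1 : S1 → X1) (c2 : S2 → X2) (p : S1 × S2) (y : Y) :
    0 ≤ OSG qS Wch c1 c2 p y :=
  mul_nonneg (qS.nonneg _) ((Wch _ _).nonneg _)

lemma OSZ_nonneg (c1 : S1 → X1) (c2 : S2 → X2) (y : Y) : 0 ≤ OSZ qS Wch c1 c2 y :=
  Finset.sum_nonneg fun p _ => OSG_nonneg qS Wch c1 c2 p y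

lemma OScbW_nonneg (tb : K → T) (c1 : S1 → X1) (c2 : S2 → X2) :
    0 ≤ OScbW qT qX1 qX2 k1 k2 tb c1 c2 := by
  unfold OScbW
  have h1 : (0:ℝ) ≤ ∏ k, qT.p (tb k) := Finset.prod_nonneg fun k _ => qT.nonneg _
  have h2 : (0:ℝ) ≤ ∏ s1, (qX1 s1 (tb (k1 s1))).p (c1 s1) :=
    Finset.prod_nonneg fun u _ => (qX1 u _).nonneg _
  have h3 : (0:ℝ) ≤ ∏ s2, (qX2 s2 (tb (k2 s2))).p (c2 s2) :=
    Finset.prod_nonneg fun u _ => (qX2 u _).nonneg _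
  exact mul_nonneg h1 (mul_nonneg h2 h3)

/-- The stochastic (posterior/likelihood) decoder for a given codebook pair. -/
noncomputable def OSdec (c1 : S1 → X1) (c2 : S2 → X2) (y : Y) : FinPMF (S1 × S2) :=
  if h : 0 < OSZ qS Wch c1 c2 y then
    ⟨fun p => OSG qS Wch c1 c2 p y / OSZ qS Wch c1 c2 y,
     fun p => div_nonneg (OSG_nonneg qS Wch c1 c2 p y) (le_of_lt h),
     by rw [← Finset.sum_div]; exact div_self (ne_of_gt h)⟩
  else unifPMF _ qS.nonempty

noncomputable def OSLam1 (s1 : S1) (s2 : S2) (y : Y) (c1 : S1 → X1) (c2 : S2 → X2) : ℝ :=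
  ∑ s1', ind (¬ s1' = s1) * (qS.p (s1', s2) * (Wch (c1 s1') (c2 s2)).p y)

noncomputable def OSLam2 (s1 : S1) (s2 : S2) (y : Y) (c1 : S1 → X1) (c2 : S2 → X2) : ℝ :=
  ∑ s2', ind (¬ s2' = s2) * (qS.p (s1, s2') * (Wch (c1 s1) (c2 s2')).p y)

noncomputable def OSLam3 (s1 : S1) (s2 : S2) (y : Y) (c1 : S1 → X1) (c2 : S2 → X2) : ℝ :=
  ∑ s1', ∑ s2', (ind (¬ s1' = s1) * (ind (¬ s2' = s2) * ind (k1 s1' = k1 s1))) *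
    (qS.p (s1', s2') * (Wch (c1 s1') (c2 s2')).p y)

noncomputable def OSLam4 (s1 : S1) (s2 : S2) (y : Y) (c1 : S1 → X1) (c2 : S2 → X2) : ℝ :=
  ∑ s1', ∑ s2', (ind (¬ s1' = s1) * (ind (¬ s2' = s2) * ind (¬ k1 s1' = k1 s1))) *
    (qS.p (s1', s2') * (Wch (c1 s1') (c2 s2')).p y)

noncomputable def OSN1 (s2 : S2) (t : T) (x2 : X2) (y : Y) : ℝ :=
  ∑ s1', qS.p (s1', s2) * ∑ x1', (qX1 s1' t).p x1' * (Wch x1' x2).p y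

noncomputable def OSN2 (s1 : S1) (t : T) (x1 : X1) (y : Y) : ℝ :=
  ∑ s2', qS.p (s1, s2') * ∑ x2', (qX2 s2' t).p x2' * (Wch x1 x2').p y

noncomputable def OSN3 (k : K) (t : T) (y : Y) : ℝ :=
  ∑ s1', ∑ s2', ind (k1 s1' = k) * (qS.p (s1', s2') *
    ∑ x1', ∑ x2', (qX1 s1' t).p x1' * ((qX2 s2' t).p x2' * (Wch x1' x2').p y))

/-- The "bad event" at a realization. -/
def OSBad (γ : ℝ) (s1 : S1) (s2 : S2) (t : T) (x1 : X1) (x2 : X2) (y : Y) : Prop :=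
  iYX1cX2S2T qS qT qX1 qX2 Wch y x1 x2 s2 t - hS1cS2 qS s1 s2 < γ ∨
  iYX2cX1S1T qS qT qX1 qX2 Wch y x1 x2 s1 t - hS2cS1 qS s1 s2 < γ ∨
  iYX1X2cKT qS qT qX1 qX2 Wch k1 y x1 x2 (k1 s1) t - hS1S2cK qS k1 s1 s2 < γ ∨
  iYX1X2 qS qT qX1 qX2 Wch y x1 x2 - hS1S2 qS s1 s2 < γ

lemma OSLam1_nonneg (s1 s2 y c1 c2) : 0 ≤ OSLam1 qS Wch s1 s2 y c1 c2 :=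
  Finset.sum_nonneg fun _ _ => mul_nonneg (ind_nonneg' _)
    (mul_nonneg (qS.nonneg _) ((Wch _ _).nonneg _))

lemma OSLam2_nonneg (s1 s2 y c1 c2) : 0 ≤ OSLam2 qS Wch s1 s2 y c1 c2 :=
  Finset.sum_nonneg fun _ _ => mul_nonneg (ind_nonneg' _)
    (mul_nonneg (qS.nonneg _) ((Wch _ _).nonneg _))

lemma OSLam3_nonneg (s1 s2 y c1 c2) : 0 ≤ OSLam3 qS Wch k1 s1 s2 y c1 c2 :=
  Finset.sum_nonneg fun _ _ => Finset.sum_nonneg fun _ _ =>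
    mul_nonneg (mul_nonneg (ind_nonneg' _) (mul_nonneg (ind_nonneg' _) (ind_nonneg' _)))
      (mul_nonneg (qS.nonneg _) ((Wch _ _).nonneg _))

lemma OSLam4_nonneg (s1 s2 y c1 c2) : 0 ≤ OSLam4 qS Wch k1 s1 s2 y c1 c2 :=
  Finset.sum_nonneg fun _ _ => Finset.sum_nonneg fun _ _ =>
    mul_nonneg (mul_nonneg (ind_nonneg' _) (mul_nonneg (ind_nonneg' _) (ind_nonneg' _)))
      (mul_nonneg (qS.nonneg _) ((Wch _ _).nonneg _))

/-- Partition of the decoding mass. -/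
lemma OSZ_split (s1 : S1) (s2 : S2) (y : Y) (c1 : S1 → X1) (c2 : S2 → X2) :
    OSZ qS Wch c1 c2 y = OSG qS Wch c1 c2 (s1, s2) y +
      (OSLam1 qS Wch s1 s2 y c1 c2 + (OSLam2 qS Wch s1 s2 y c1 c2 +
       (OSLam3 qS Wch k1 s1 s2 y c1 c2 + OSLam4 qS Wch k1 s1 s2 y c1 c2))) := by
  have expand : ∀ s1' s2', OSG qS Wch c1 c2 (s1', s2') y =
      ind (s1' = s1) * (ind (s2' = s2) * OSG qS Wch c1 c2 (s1', s2') y) +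
      (ind (¬ s1' = s1) * (ind (s2' = s2) * OSG qS Wch c1 c2 (s1', s2') y) +
      (ind (s1' = s1) * (ind (¬ s2' = s2) * OSG qS Wch c1 c2 (s1', s2') y) +
      ((ind (¬ s1' = s1) * (ind (¬ s2' = s2) * ind (k1 s1' = k1 s1))) *
          OSG qS Wch c1 c2 (s1', s2') y +
       (ind (¬ s1' = s1) * (ind (¬ s2' = s2) * ind (¬ k1 s1' = k1 s1))) *
          OSG qS Wch c1 c2 (s1', s2') y))) := by
    intro s1' s2'
    by_cases h1 : s1' = s1 <;> by_cases h2 : s2' = s2 <;> by_cases h3 : k1 s1' = k1 s1 <;>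
      simp [ind, h1, h2, h3]
  have hZ : OSZ qS Wch c1 c2 y = ∑ s1', ∑ s2', OSG qS Wch c1 c2 (s1', s2') y := by
    rw [OSZ, Fintype.sum_prod_type]
  rw [hZ, Finset.sum_congr rfl (fun s1' _ => Finset.sum_congr rfl (fun s2' _ => expand s1' s2'))]
  simp only [Finset.sum_add_distrib]
  have P0 : ∑ s1', ∑ s2', ind (s1' = s1) * (ind (s2' = s2) * OSG qS Wch c1 c2 (s1', s2') y)
      = OSG qS Wch c1 c2 (s1, s2) y := by
    rw [Finset.sum_congr rfl (fun s1' _ => by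
      rw [← Finset.mul_sum, sum_ind_collapse2 s2 (fun s2' => OSG qS Wch c1 c2 (s1', s2') y)])]
    exact sum_ind_collapse2 s1 (fun s1' => OSG qS Wch c1 c2 (s1', s2) y)
  have P1 : ∑ s1', ∑ s2', ind (¬ s1' = s1) * (ind (s2' = s2) * OSG qS Wch c1 c2 (s1', s2') y)
      = OSLam1 qS Wch s1 s2 y c1 c2 := by
    refine Finset.sum_congr rfl fun s1' _ => ?_
    rw [← Finset.mul_sum, sum_ind_collapse2 s2 (fun s2' => OSG qS Wch c1 c2 (s1', s2') y)]
    rfl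
  have P2 : ∑ s1', ∑ s2', ind (s1' = s1) * (ind (¬ s2' = s2) * OSG qS Wch c1 c2 (s1', s2') y)
      = OSLam2 qS Wch s1 s2 y c1 c2 := by
    rw [Finset.sum_congr rfl (fun s1' (_ : s1' ∈ Finset.univ) => (Finset.mul_sum
      (Finset.univ) (fun s2' => ind (¬ s2' = s2) * OSG qS Wch c1 c2 (s1', s2') y)
      (ind (s1' = s1))).symm)]
    rw [sum_ind_collapse2 s1
      (fun s1' => ∑ s2', ind (¬ s2' = s2) * OSG qS Wch c1 c2 (s1', s2') y)]
    rfl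
  rw [P0, P1, P2]
  rfl

lemma OSdec_bound (s1 : S1) (s2 : S2) (y : Y) (c1 : S1 → X1) (c2 : S2 → X2) :
    OSG qS Wch c1 c2 (s1, s2) y * (1 - (OSdec qS Wch c1 c2 y).p (s1, s2)) ≤
      min (OSG qS Wch c1 c2 (s1, s2) y)
        (OSLam1 qS Wch s1 s2 y c1 c2 + (OSLam2 qS Wch s1 s2 y c1 c2 +
         (OSLam3 qS Wch k1 s1 s2 y c1 c2 + OSLam4 qS Wch k1 s1 s2 y c1 c2))) := by
  set G := OSG qS Wch c1 c2 (s1, s2) y with hGdef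
  set L := OSLam1 qS Wch s1 s2 y c1 c2 + (OSLam2 qS Wch s1 s2 y c1 c2 +
    (OSLam3 qS Wch k1 s1 s2 y c1 c2 + OSLam4 qS Wch k1 s1 s2 y c1 c2)) with hLdef
  have hG0 : 0 ≤ G := OSG_nonneg qS Wch c1 c2 (s1, s2) y
  have hL0 : 0 ≤ L := by
    have := OSLam1_nonneg qS Wch s1 s2 y c1 c2
    have := OSLam2_nonneg qS Wch s1 s2 y c1 c2
    have := OSLam3_nonneg qS Wch k1 s1 s2 y c1 c2
    have := OSLam4_nonneg qS Wch k1 s1 s2 y c1 c2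
    rw [hLdef]; linarith
  have hZL : OSZ qS Wch c1 c2 y = G + L := OSZ_split qS Wch k1 s1 s2 y c1 c2
  unfold OSdec
  split_ifs with h
  · have hZpos : (0:ℝ) < G + L := by rw [← hZL]; exact h
    have hdecp : (⟨fun p => OSG qS Wch c1 c2 p y / OSZ qS Wch c1 c2 y,
        fun p => div_nonneg (OSG_nonneg qS Wch c1 c2 p y) (le_of_lt h),
        by rw [← Finset.sum_div]; exact div_self (ne_of_gt h)⟩ :
        FinPMF (S1 × S2)).p (s1, s2) = G / (G + L) := by
      simp only [← hGdef, ← hZL]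
    rw [hdecp]
    have h1 : G * (1 - G / (G + L)) = G * (L / (G + L)) := by
      field_simp
      ring
    rw [h1]
    refine le_min ?_ ?_
    · have hle1 : L / (G + L) ≤ 1 := by
        rw [div_le_one hZpos]; linarith
      calc G * (L / (G + L)) ≤ G * 1 := mul_le_mul_of_nonneg_left hle1 hG0
        _ = G := mul_one G
    · have h2 : G * (L / (G + L)) = L * (G / (G + L)) := by ring
      have hle2 : G / (G + L) ≤ 1 := by
        rw [div_le_one hZpos]; linarith
      rw [h2]
      calc L * (G / (G + L)) ≤ L * 1 := mul_le_mul_of_nonneg_left hle2 hL0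
        _ = L := mul_one L
  · have hZ0 : OSZ qS Wch c1 c2 y = 0 :=
      le_antisymm (not_lt.mp h) (OSZ_nonneg qS Wch c1 c2 y)
    have hG00 : G = 0 := by
      have : G + L = 0 := by rw [← hZL]; exact hZ0
      linarith
    rw [hG00, zero_mul]
    exact le_min le_rfl hL0

lemma pError_code (c1 : S1 → X1) (c2 : S2 → X2) :
    pErrorMAC qS Wch (fun s1 => diracPMF (c1 s1)) (fun s2 => diracPMF (c2 s2))
      (fun y => OSdec qS Wch c1 c2 y)
    = ∑ s1, ∑ s2, ∑ y, OSG qS Wch c1 c2 (s1, s2) y *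
        (1 - (OSdec qS Wch c1 c2 y).p (s1, s2)) := by
  unfold pErrorMAC
  refine Finset.sum_congr rfl fun s1 _ => Finset.sum_congr rfl fun s2 _ => ?_
  rw [Finset.sum_eq_single (c1 s1)]
  · rw [Finset.sum_eq_single (c2 s2)]
    · refine Finset.sum_congr rfl fun y _ => ?_
      simp [diracPMF, OSG]
    · intro x2 _ hx2
      apply Finset.sum_eq_zero
      intro y _
      simp [diracPMF, hx2]
    · simp
  · intro x1 _ hx1
    apply Finset.sum_eq_zero
    intro x2 _
    apply Finset.sum_eq_zero
    intro y _
    simp [diracPMF, hx1]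
  · simp

lemma OScbW_total :
    ∑ tb : K → T, ∑ c1 : S1 → X1, ∑ c2 : S2 → X2, OScbW qT qX1 qX2 k1 k2 tb c1 c2 = 1 := by
  unfold OScbW
  have h2 : ∀ tb : K → T, (∑ c1 : S1 → X1, ∏ s1, (qX1 s1 (tb (k1 s1))).p (c1 s1)) = 1 :=
    fun tb => engine0 (fun u v => (qX1 u (tb (k1 u))).p v) (fun u => (qX1 u _).sum_eq_one)
  have h3 : ∀ tb : K → T, (∑ c2 : S2 → X2, ∏ s2, (qX2 s2 (tb (k2 s2))).p (c2 s2)) = 1 :=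
    fun tb => engine0 (fun u v => (qX2 u (tb (k2 u))).p v) (fun u => (qX2 u _).sum_eq_one)
  have key : ∀ tb : K → T, ∑ c1 : S1 → X1, ∑ c2 : S2 → X2,
      (∏ k, qT.p (tb k)) * ((∏ s1, (qX1 s1 (tb (k1 s1))).p (c1 s1)) *
        (∏ s2, (qX2 s2 (tb (k2 s2))).p (c2 s2))) = ∏ k, qT.p (tb k) := by
    intro tb
    have hfac : ∑ c1 : S1 → X1, ∑ c2 : S2 → X2,
        (∏ k, qT.p (tb k)) * ((∏ s1, (qX1 s1 (tb (k1 s1))).p (c1 s1)) *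
          (∏ s2, (qX2 s2 (tb (k2 s2))).p (c2 s2)))
        = (∏ k, qT.p (tb k)) * ((∑ c1 : S1 → X1, ∏ s1, (qX1 s1 (tb (k1 s1))).p (c1 s1)) *
            (∑ c2 : S2 → X2, ∏ s2, (qX2 s2 (tb (k2 s2))).p (c2 s2))) := by
      rw [Finset.sum_mul_sum, Finset.mul_sum]
      refine Finset.sum_congr rfl fun c1 _ => ?_
      rw [Finset.mul_sum]
    rw [hfac, h2, h3, mul_one, mul_one]
  rw [Finset.sum_congr rfl (fun tb _ => key tb)]
  exact engine0 (fun _ t' => qT.p t') (fun _ => qT.sum_eq_one)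

end MainDev

/- ===================== Marginal identities and threshold lemmas ===================== -/

section MainDev2

variable [DecidableEq S1] [DecidableEq S2] [DecidableEq K]
  [DecidableEq T] [DecidableEq X1] [DecidableEq X2]

variable (qS : FinPMF (S1 × S2)) (qT : FinPMF T) (qX1 : S1 → T → FinPMF X1)
  (qX2 : S2 → T → FinPMF X2) (Wch : X1 → X2 → FinPMF Y) (k1 : S1 → K) (k2 : S2 → K)

lemma sum_mul_pmf' {β : Type} [Fintype β] (P : FinPMF β) (f : β → ℝ) (C : ℝ)
    (h : ∀ x, f x = C * P.p x) : ∑ x, f x = C := by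
  rw [Finset.sum_congr rfl fun x _ => h x]
  exact sum_pmf_mul P C

lemma sum_pos_of_term {α : Type} [Fintype α] (f : α → ℝ) (h0 : ∀ a, 0 ≤ f a) (a : α)
    (h : 0 < f a) : 0 < ∑ x, f x :=
  lt_of_lt_of_le h (Finset.single_le_sum (fun i _ => h0 i) (Finset.mem_univ a))

lemma qMAC_nonneg (s1 : S1) (s2 : S2) (t : T) (x1 : X1) (x2 : X2) (y : Y) :
    0 ≤ qMAC qS qT qX1 qX2 Wch s1 s2 t x1 x2 y := by
  unfold qMAC
  have := qS.nonneg (s1, s2); have := qT.nonneg t; have := (qX1 s1 t).nonneg x1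
  have := (qX2 s2 t).nonneg x2; have := (Wch x1 x2).nonneg y
  positivity

lemma pos_of_mul' {a b : ℝ} (h : 0 < a * b) (ha : 0 ≤ a) (hb : 0 ≤ b) : 0 < a ∧ 0 < b := by
  rcases mul_pos_iff.mp h with ⟨h1, h2⟩ | ⟨h1, h2⟩
  · exact ⟨h1, h2⟩
  · exact absurd h1 (not_lt.mpr ha)

lemma qMAC_factors {s1 : S1} {s2 : S2} {t : T} {x1 : X1} {x2 : X2} {y : Y}
    (h : 0 < qMAC qS qT qX1 qX2 Wch s1 s2 t x1 x2 y) :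
    0 < qS.p (s1, s2) ∧ 0 < qT.p t ∧ 0 < (qX1 s1 t).p x1 ∧ 0 < (qX2 s2 t).p x2 ∧
      0 < (Wch x1 x2).p y := by
  unfold qMAC at h
  obtain ⟨h4, hW⟩ := pos_of_mul' h
    (by have := qS.nonneg (s1,s2); have := qT.nonneg t; have := (qX1 s1 t).nonneg x1
        have := (qX2 s2 t).nonneg x2; positivity) ((Wch x1 x2).nonneg y)
  obtain ⟨h3, ha2⟩ := pos_of_mul' h4
    (by have := qS.nonneg (s1,s2); have := qT.nonneg t; have := (qX1 s1 t).nonneg x1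
        positivity) ((qX2 s2 t).nonneg x2)
  obtain ⟨h2, ha1⟩ := pos_of_mul' h3
    (by have := qS.nonneg (s1,s2); have := qT.nonneg t; positivity) ((qX1 s1 t).nonneg x1)
  obtain ⟨hq, ht⟩ := pos_of_mul' h2 (qS.nonneg (s1,s2)) (qT.nonneg t)
  exact ⟨hq, ht, ha1, ha2, hW⟩

/- ---------- marginal factorizations ---------- -/

lemma mar_YX1X2S2T (y : Y) (x1 : X1) (x2 : X2) (s2 : S2) (t : T) :
    mYX1X2S2T qS qT qX1 qX2 Wch y x1 x2 s2 t
      = (Wch x1 x2).p y * mX1X2S2T qS qT qX1 qX2 Wch x1 x2 s2 t := by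
  unfold mYX1X2S2T mX1X2S2T qMAC
  rw [Finset.mul_sum]
  refine Finset.sum_congr rfl fun s1 _ => ?_
  rw [sum_pmf_mul (Wch x1 x2) (qS.p (s1, s2) * qT.p t * (qX1 s1 t).p x1 * (qX2 s2 t).p x2)]
  ring

lemma mar_X2S2T (x2 : X2) (s2 : S2) (t : T) :
    mX2S2T qS qT qX1 qX2 Wch x2 s2 t = qT.p t * ((qX2 s2 t).p x2 * mgS2 qS s2) := by
  unfold mX2S2T mgS2 qMAC
  rw [Finset.mul_sum, Finset.mul_sum]
  refine Finset.sum_congr rfl fun s1 _ => ?_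
  have h1 : ∀ x1, ∑ y, qS.p (s1, s2) * qT.p t * (qX1 s1 t).p x1 * (qX2 s2 t).p x2 *
      (Wch x1 x2).p y = qS.p (s1, s2) * qT.p t * (qX1 s1 t).p x1 * (qX2 s2 t).p x2 :=
    fun x1 => sum_pmf_mul (Wch x1 x2) _
  rw [Finset.sum_congr rfl fun x1 _ => h1 x1]
  have h2 : ∀ x1:X1, qS.p (s1, s2) * qT.p t * (qX1 s1 t).p x1 * (qX2 s2 t).p x2
      = (qS.p (s1, s2) * qT.p t * (qX2 s2 t).p x2) * (qX1 s1 t).p x1 := fun x1 => by ring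
  rw [Finset.sum_congr rfl fun x1 _ => h2 x1, ← Finset.mul_sum, (qX1 s1 t).sum_eq_one]
  ring

lemma mar_YX2S2T (y : Y) (x2 : X2) (s2 : S2) (t : T) :
    mYX2S2T qS qT qX1 qX2 Wch y x2 s2 t
      = qT.p t * ((qX2 s2 t).p x2 * OSN1 qS qX1 Wch s2 t x2 y) := by
  unfold mYX2S2T OSN1 qMAC
  rw [Finset.mul_sum, Finset.mul_sum]
  refine Finset.sum_congr rfl fun s1 _ => ?_
  have h2 : ∀ x1:X1, qS.p (s1, s2) * qT.p t * (qX1 s1 t).p x1 * (qX2 s2 t).p x2 *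
        (Wch x1 x2).p y
      = (qT.p t * (qX2 s2 t).p x2) * (qS.p (s1, s2) * ((qX1 s1 t).p x1 * (Wch x1 x2).p y)) :=
    fun x1 => by ring
  rw [Finset.sum_congr rfl fun x1 _ => h2 x1, ← Finset.mul_sum, ← Finset.mul_sum]
  ring

lemma mar_YX1X2S1T (y : Y) (x1 : X1) (x2 : X2) (s1 : S1) (t : T) :
    mYX1X2S1T qS qT qX1 qX2 Wch y x1 x2 s1 t
      = (Wch x1 x2).p y * mX1X2S1T qS qT qX1 qX2 Wch x1 x2 s1 t := by
  unfold mYX1X2S1T mX1X2S1T qMAC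
  rw [Finset.mul_sum]
  refine Finset.sum_congr rfl fun s2 _ => ?_
  rw [sum_pmf_mul (Wch x1 x2) (qS.p (s1, s2) * qT.p t * (qX1 s1 t).p x1 * (qX2 s2 t).p x2)]
  ring

lemma mar_X1S1T (x1 : X1) (s1 : S1) (t : T) :
    mX1S1T qS qT qX1 qX2 Wch x1 s1 t = qT.p t * ((qX1 s1 t).p x1 * mgS1 qS s1) := by
  unfold mX1S1T mgS1 qMAC
  rw [Finset.mul_sum, Finset.mul_sum]
  refine Finset.sum_congr rfl fun s2 _ => ?_
  have h1 : ∀ x2, ∑ y, qS.p (s1, s2) * qT.p t * (qX1 s1 t).p x1 * (qX2 s2 t).p x2 *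
      (Wch x1 x2).p y = qS.p (s1, s2) * qT.p t * (qX1 s1 t).p x1 * (qX2 s2 t).p x2 :=
    fun x2 => sum_pmf_mul (Wch x1 x2) _
  rw [Finset.sum_congr rfl fun x2 _ => h1 x2]
  have h2 : ∀ x2:X2, qS.p (s1, s2) * qT.p t * (qX1 s1 t).p x1 * (qX2 s2 t).p x2
      = (qS.p (s1, s2) * qT.p t * (qX1 s1 t).p x1) * (qX2 s2 t).p x2 := fun x2 => by ring
  rw [Finset.sum_congr rfl fun x2 _ => h2 x2, ← Finset.mul_sum, (qX2 s2 t).sum_eq_one]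
  ring

lemma mar_YX1S1T (y : Y) (x1 : X1) (s1 : S1) (t : T) :
    mYX1S1T qS qT qX1 qX2 Wch y x1 s1 t
      = qT.p t * ((qX1 s1 t).p x1 * OSN2 qS qX2 Wch s1 t x1 y) := by
  unfold mYX1S1T OSN2 qMAC
  rw [Finset.mul_sum, Finset.mul_sum]
  refine Finset.sum_congr rfl fun s2 _ => ?_
  have h2 : ∀ x2:X2, qS.p (s1, s2) * qT.p t * (qX1 s1 t).p x1 * (qX2 s2 t).p x2 *
        (Wch x1 x2).p y
      = (qT.p t * (qX1 s1 t).p x1) * (qS.p (s1, s2) * ((qX2 s2 t).p x2 * (Wch x1 x2).p y)) :=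
    fun x2 => by ring
  rw [Finset.sum_congr rfl fun x2 _ => h2 x2, ← Finset.mul_sum, ← Finset.mul_sum]
  ring

lemma mar_YX1X2KT (y : Y) (x1 : X1) (x2 : X2) (k : K) (t : T) :
    mYX1X2KT qS qT qX1 qX2 Wch k1 y x1 x2 k t
      = (Wch x1 x2).p y * mX1X2KT qS qT qX1 qX2 Wch k1 x1 x2 k t := by
  unfold mYX1X2KT mX1X2KT qMAC
  rw [Finset.mul_sum]
  refine Finset.sum_congr rfl fun s1 _ => ?_
  rw [Finset.mul_sum]
  refine Finset.sum_congr rfl fun s2 _ => ?_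
  have h1 : ∑ y', ind (k1 s1 = k) *
      (qS.p (s1, s2) * qT.p t * (qX1 s1 t).p x1 * (qX2 s2 t).p x2 * (Wch x1 x2).p y')
      = ind (k1 s1 = k) * (qS.p (s1, s2) * qT.p t * (qX1 s1 t).p x1 * (qX2 s2 t).p x2) :=
    sum_mul_pmf' (Wch x1 x2) _ _ (fun y' => by ring)
  rw [h1]
  ring

lemma mar_KT (k : K) (t : T) :
    mKT qS qT qX1 qX2 Wch k1 k t = qT.p t * mgK qS k1 k := by
  unfold mKT mgK qMAC
  rw [Finset.mul_sum]
  refine Finset.sum_congr rfl fun s1 _ => ?_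
  rw [Finset.mul_sum]
  refine Finset.sum_congr rfl fun s2 _ => ?_
  have hy : ∀ (x1 : X1) (x2 : X2), ∑ y, ind (k1 s1 = k) *
      (qS.p (s1, s2) * qT.p t * (qX1 s1 t).p x1 * (qX2 s2 t).p x2 * (Wch x1 x2).p y)
      = ind (k1 s1 = k) * (qS.p (s1, s2) * qT.p t * (qX1 s1 t).p x1 * (qX2 s2 t).p x2) :=
    fun x1 x2 => sum_mul_pmf' (Wch x1 x2) _ _ (fun y => by ring)
  rw [Finset.sum_congr rfl fun x1 _ => Finset.sum_congr rfl fun x2 _ => hy x1 x2]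
  have hx2 : ∀ x1 : X1, ∑ x2, ind (k1 s1 = k) *
      (qS.p (s1, s2) * qT.p t * (qX1 s1 t).p x1 * (qX2 s2 t).p x2)
      = ind (k1 s1 = k) * (qS.p (s1, s2) * qT.p t * (qX1 s1 t).p x1) :=
    fun x1 => sum_mul_pmf' (qX2 s2 t) _ _ (fun x2 => by ring)
  rw [Finset.sum_congr rfl fun x1 _ => hx2 x1]
  exact (sum_mul_pmf' (qX1 s1 t) _ (ind (k1 s1 = k) * (qS.p (s1, s2) * qT.p t))
    (fun x1 => by ring)).trans (by ring)

lemma mar_YKT (y : Y) (k : K) (t : T) :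
    mYKT qS qT qX1 qX2 Wch k1 y k t = qT.p t * OSN3 qS qX1 qX2 Wch k1 k t y := by
  unfold mYKT OSN3 qMAC
  rw [Finset.mul_sum]
  refine Finset.sum_congr rfl fun s1 _ => ?_
  rw [Finset.mul_sum]
  refine Finset.sum_congr rfl fun s2 _ => ?_
  have hpull : ∑ x1, ∑ x2, (qT.p t * (ind (k1 s1 = k) * qS.p (s1, s2))) *
          ((qX1 s1 t).p x1 * ((qX2 s2 t).p x2 * (Wch x1 x2).p y))
      = (qT.p t * (ind (k1 s1 = k) * qS.p (s1, s2))) *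
          ∑ x1, ∑ x2, (qX1 s1 t).p x1 * ((qX2 s2 t).p x2 * (Wch x1 x2).p y) := by
    rw [Finset.mul_sum]
    exact Finset.sum_congr rfl fun x1 _ => (Finset.mul_sum _ _ _).symm
  calc ∑ x1, ∑ x2, ind (k1 s1 = k) *
        (qS.p (s1, s2) * qT.p t * (qX1 s1 t).p x1 * (qX2 s2 t).p x2 * (Wch x1 x2).p y)
      = ∑ x1, ∑ x2, (qT.p t * (ind (k1 s1 = k) * qS.p (s1, s2))) *
          ((qX1 s1 t).p x1 * ((qX2 s2 t).p x2 * (Wch x1 x2).p y)) :=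
        Finset.sum_congr rfl fun x1 _ => Finset.sum_congr rfl fun x2 _ => by ring
    _ = (qT.p t * (ind (k1 s1 = k) * qS.p (s1, s2))) *
          ∑ x1, ∑ x2, (qX1 s1 t).p x1 * ((qX2 s2 t).p x2 * (Wch x1 x2).p y) := hpull
    _ = qT.p t * (ind (k1 s1 = k) * (qS.p (s1, s2) *
          ∑ x1, ∑ x2, (qX1 s1 t).p x1 * ((qX2 s2 t).p x2 * (Wch x1 x2).p y))) := by ring

lemma mar_YX1X2 (y : Y) (x1 : X1) (x2 : X2) :
    mYX1X2 qS qT qX1 qX2 Wch y x1 x2 = (Wch x1 x2).p y * mX1X2 qS qT qX1 qX2 Wch x1 x2 := by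
  unfold mYX1X2 mX1X2 qMAC
  rw [Finset.mul_sum]
  refine Finset.sum_congr rfl fun s1 _ => ?_
  rw [Finset.mul_sum]
  refine Finset.sum_congr rfl fun s2 _ => ?_
  rw [Finset.mul_sum]
  refine Finset.sum_congr rfl fun t _ => ?_
  rw [sum_pmf_mul (Wch x1 x2) (qS.p (s1, s2) * qT.p t * (qX1 s1 t).p x1 * (qX2 s2 t).p x2)]
  ring

/- ---------- positivity at a positive point ---------- -/

section Positivity

variable {s1 : S1} {s2 : S2} {t : T} {x1 : X1} {x2 : X2} {y : Y}

lemma mgS2_pos (h : 0 < qMAC qS qT qX1 qX2 Wch s1 s2 t x1 x2 y) : 0 < mgS2 qS s2 :=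
  sum_pos_of_term _ (fun a => qS.nonneg _) s1 (qMAC_factors qS qT qX1 qX2 Wch h).1

lemma mgS1_pos (h : 0 < qMAC qS qT qX1 qX2 Wch s1 s2 t x1 x2 y) : 0 < mgS1 qS s1 :=
  sum_pos_of_term _ (fun a => qS.nonneg _) s2 (qMAC_factors qS qT qX1 qX2 Wch h).1

lemma mgK_pos (h : 0 < qMAC qS qT qX1 qX2 Wch s1 s2 t x1 x2 y) : 0 < mgK qS k1 (k1 s1) := by
  refine sum_pos_of_term _ (fun a => Finset.sum_nonneg fun b _ =>
    mul_nonneg (ind_nonneg' _) (qS.nonneg _)) s1 ?_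
  refine sum_pos_of_term _ (fun b => mul_nonneg (ind_nonneg' _) (qS.nonneg _)) s2 ?_
  rw [ind_of_true rfl, one_mul]
  exact (qMAC_factors qS qT qX1 qX2 Wch h).1

lemma mX1X2S2T_pos (h : 0 < qMAC qS qT qX1 qX2 Wch s1 s2 t x1 x2 y) :
    0 < mX1X2S2T qS qT qX1 qX2 Wch x1 x2 s2 t := by
  refine sum_pos_of_term _ (fun a => Finset.sum_nonneg fun b _ =>
    qMAC_nonneg qS qT qX1 qX2 Wch _ _ _ _ _ _) s1 ?_
  exact sum_pos_of_term _ (fun b => qMAC_nonneg qS qT qX1 qX2 Wch _ _ _ _ _ _) y h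

lemma mX1X2S1T_pos (h : 0 < qMAC qS qT qX1 qX2 Wch s1 s2 t x1 x2 y) :
    0 < mX1X2S1T qS qT qX1 qX2 Wch x1 x2 s1 t := by
  refine sum_pos_of_term _ (fun a => Finset.sum_nonneg fun b _ =>
    qMAC_nonneg qS qT qX1 qX2 Wch _ _ _ _ _ _) s2 ?_
  exact sum_pos_of_term _ (fun b => qMAC_nonneg qS qT qX1 qX2 Wch _ _ _ _ _ _) y h

lemma mX1X2KT_pos (h : 0 < qMAC qS qT qX1 qX2 Wch s1 s2 t x1 x2 y) :
    0 < mX1X2KT qS qT qX1 qX2 Wch k1 x1 x2 (k1 s1) t := by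
  refine sum_pos_of_term _ (fun a => Finset.sum_nonneg fun b _ => Finset.sum_nonneg fun c _ =>
    mul_nonneg (ind_nonneg' _) (qMAC_nonneg qS qT qX1 qX2 Wch _ _ _ _ _ _)) s1 ?_
  refine sum_pos_of_term _ (fun b => Finset.sum_nonneg fun c _ =>
    mul_nonneg (ind_nonneg' _) (qMAC_nonneg qS qT qX1 qX2 Wch _ _ _ _ _ _)) s2 ?_
  refine sum_pos_of_term _ (fun c =>
    mul_nonneg (ind_nonneg' _) (qMAC_nonneg qS qT qX1 qX2 Wch _ _ _ _ _ _)) y ?_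
  rw [ind_of_true rfl, one_mul]
  exact h

lemma mX1X2_pos (h : 0 < qMAC qS qT qX1 qX2 Wch s1 s2 t x1 x2 y) :
    0 < mX1X2 qS qT qX1 qX2 Wch x1 x2 := by
  refine sum_pos_of_term _ (fun a => Finset.sum_nonneg fun b _ => Finset.sum_nonneg fun c _ =>
    Finset.sum_nonneg fun d _ => qMAC_nonneg qS qT qX1 qX2 Wch _ _ _ _ _ _) s1 ?_
  refine sum_pos_of_term _ (fun b => Finset.sum_nonneg fun c _ =>
    Finset.sum_nonneg fun d _ => qMAC_nonneg qS qT qX1 qX2 Wch _ _ _ _ _ _) s2 ?_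
  refine sum_pos_of_term _ (fun c =>
    Finset.sum_nonneg fun d _ => qMAC_nonneg qS qT qX1 qX2 Wch _ _ _ _ _ _) t ?_
  exact sum_pos_of_term _ (fun d => qMAC_nonneg qS qT qX1 qX2 Wch _ _ _ _ _ _) y h

lemma mY_pos (h : 0 < qMAC qS qT qX1 qX2 Wch s1 s2 t x1 x2 y) :
    0 < mY qS qT qX1 qX2 Wch y := by
  refine sum_pos_of_term _ (fun a => Finset.sum_nonneg fun b _ => Finset.sum_nonneg fun c _ =>
    Finset.sum_nonneg fun d _ => Finset.sum_nonneg fun e _ =>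
      qMAC_nonneg qS qT qX1 qX2 Wch _ _ _ _ _ _) s1 ?_
  refine sum_pos_of_term _ (fun b => Finset.sum_nonneg fun c _ =>
    Finset.sum_nonneg fun d _ => Finset.sum_nonneg fun e _ =>
      qMAC_nonneg qS qT qX1 qX2 Wch _ _ _ _ _ _) s2 ?_
  refine sum_pos_of_term _ (fun c => Finset.sum_nonneg fun d _ =>
    Finset.sum_nonneg fun e _ => qMAC_nonneg qS qT qX1 qX2 Wch _ _ _ _ _ _) t ?_
  refine sum_pos_of_term _ (fun d =>
    Finset.sum_nonneg fun e _ => qMAC_nonneg qS qT qX1 qX2 Wch _ _ _ _ _ _) x1 ?_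
  exact sum_pos_of_term _ (fun e => qMAC_nonneg qS qT qX1 qX2 Wch _ _ _ _ _ _) x2 h

lemma OSN1_pos (h : 0 < qMAC qS qT qX1 qX2 Wch s1 s2 t x1 x2 y) :
    0 < OSN1 qS qX1 Wch s2 t x2 y := by
  obtain ⟨hq, ht, ha1, ha2, hW⟩ := qMAC_factors qS qT qX1 qX2 Wch h
  refine sum_pos_of_term _ (fun a => mul_nonneg (qS.nonneg _) (Finset.sum_nonneg fun b _ =>
    mul_nonneg ((qX1 a t).nonneg _) ((Wch b x2).nonneg _))) s1 ?_
  exact mul_pos hq (sum_pos_of_term _ (fun b =>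
    mul_nonneg ((qX1 s1 t).nonneg _) ((Wch b x2).nonneg _)) x1 (mul_pos ha1 hW))

lemma OSN2_pos (h : 0 < qMAC qS qT qX1 qX2 Wch s1 s2 t x1 x2 y) :
    0 < OSN2 qS qX2 Wch s1 t x1 y := by
  obtain ⟨hq, ht, ha1, ha2, hW⟩ := qMAC_factors qS qT qX1 qX2 Wch h
  refine sum_pos_of_term _ (fun a => mul_nonneg (qS.nonneg _) (Finset.sum_nonneg fun b _ =>
    mul_nonneg ((qX2 a t).nonneg _) ((Wch x1 b).nonneg _))) s2 ?_
  exact mul_pos hq (sum_pos_of_term _ (fun b =>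
    mul_nonneg ((qX2 s2 t).nonneg _) ((Wch x1 b).nonneg _)) x2 (mul_pos ha2 hW))

lemma OSN3_pos (h : 0 < qMAC qS qT qX1 qX2 Wch s1 s2 t x1 x2 y) :
    0 < OSN3 qS qX1 qX2 Wch k1 (k1 s1) t y := by
  obtain ⟨hq, ht, ha1, ha2, hW⟩ := qMAC_factors qS qT qX1 qX2 Wch h
  have hinner : ∀ a b, 0 ≤ ind (k1 a = k1 s1) * (qS.p (a, b) *
      ∑ x1', ∑ x2', (qX1 a t).p x1' * ((qX2 b t).p x2' * (Wch x1' x2').p y)) :=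
    fun a b => mul_nonneg (ind_nonneg' _) (mul_nonneg (qS.nonneg _)
      (Finset.sum_nonneg fun c _ => Finset.sum_nonneg fun d _ =>
        mul_nonneg ((qX1 a t).nonneg _)
          (mul_nonneg ((qX2 b t).nonneg _) ((Wch c d).nonneg _))))
  refine sum_pos_of_term _ (fun a => Finset.sum_nonneg fun b _ => hinner a b) s1 ?_
  refine sum_pos_of_term _ (fun b => hinner s1 b) s2 ?_
  rw [ind_of_true rfl, one_mul]
  refine mul_pos hq ?_
  refine sum_pos_of_term _ (fun c => Finset.sum_nonneg fun d _ =>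
    mul_nonneg ((qX1 s1 t).nonneg _)
      (mul_nonneg ((qX2 s2 t).nonneg _) ((Wch c d).nonneg _))) x1 ?_
  refine sum_pos_of_term _ (fun d => mul_nonneg ((qX1 s1 t).nonneg _)
    (mul_nonneg ((qX2 s2 t).nonneg _) ((Wch x1 d).nonneg _))) x2 ?_
  exact mul_pos ha1 (mul_pos ha2 hW)

end Positivity

/- ---------- threshold lemmas ---------- -/

lemma le_of_le_logb {R γ : ℝ} (hR : 0 < R) (h : γ ≤ Real.logb 2 R) : (2:ℝ)^γ ≤ R := by
  have h2 : (2:ℝ)^γ ≤ (2:ℝ)^(Real.logb 2 R) :=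
    (Real.rpow_le_rpow_left_iff (by norm_num)).mpr h
  rwa [Real.rpow_logb (by norm_num) (by norm_num) hR] at h2

lemma N_le_of_cond {N A γ : ℝ} (hN : 0 < N) (hA : 0 < A)
    (h : γ ≤ Real.logb 2 (A / N)) : N ≤ (2:ℝ)^(-γ) * A := by
  have h1 := le_of_le_logb (div_pos hA hN) h
  have h2pos : (0:ℝ) < (2:ℝ)^γ := Real.rpow_pos_of_pos (by norm_num) γ
  have h3 : N * (2:ℝ)^γ ≤ N * (A / N) := mul_le_mul_of_nonneg_left h1 (le_of_lt hN)
  have h4 : N * (A / N) = A := by field_simp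
  rw [Real.rpow_neg (by norm_num : (0:ℝ) ≤ 2)]
  rw [← mul_le_mul_iff_right₀ h2pos]
  calc (2:ℝ)^γ * N ≤ A := by linarith
    _ = (2:ℝ)^γ * (((2:ℝ)^γ)⁻¹ * A) := by field_simp

lemma Tcond1 {γ : ℝ} {s1 : S1} {s2 : S2} {t : T} {x1 : X1} {x2 : X2} {y : Y}
    (hpos : 0 < qMAC qS qT qX1 qX2 Wch s1 s2 t x1 x2 y)
    (hc : γ ≤ iYX1cX2S2T qS qT qX1 qX2 Wch y x1 x2 s2 t - hS1cS2 qS s1 s2) :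
    OSN1 qS qX1 Wch s2 t x2 y ≤ (2:ℝ)^(-γ) * (qS.p (s1, s2) * (Wch x1 x2).p y) := by
  obtain ⟨hq, ht, ha1, ha2, hW⟩ := qMAC_factors qS qT qX1 qX2 Wch hpos
  have hB := mX1X2S2T_pos qS qT qX1 qX2 Wch hpos
  have hM := mgS2_pos qS qT qX1 qX2 Wch hpos
  have hN := OSN1_pos qS qT qX1 qX2 Wch hpos
  have hiden : iYX1cX2S2T qS qT qX1 qX2 Wch y x1 x2 s2 t
      = Real.logb 2 ((Wch x1 x2).p y * mgS2 qS s2 / OSN1 qS qX1 Wch s2 t x2 y) := by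
    unfold iYX1cX2S2T
    rw [mar_YX1X2S2T, mar_X2S2T, mar_YX2S2T]
    congr 1
    field_simp
  have hsum : iYX1cX2S2T qS qT qX1 qX2 Wch y x1 x2 s2 t - hS1cS2 qS s1 s2
      = Real.logb 2 (qS.p (s1, s2) * (Wch x1 x2).p y / OSN1 qS qX1 Wch s2 t x2 y) := by
    unfold hS1cS2
    rw [hiden, sub_neg_eq_add, ← Real.logb_mul (by positivity) (by positivity)]
    congr 1
    field_simp
  rw [hsum] at hc
  exact N_le_of_cond hN (by positivity) hc

lemma Tcond2 {γ : ℝ} {s1 : S1} {s2 : S2} {t : T} {x1 : X1} {x2 : X2} {y : Y}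
    (hpos : 0 < qMAC qS qT qX1 qX2 Wch s1 s2 t x1 x2 y)
    (hc : γ ≤ iYX2cX1S1T qS qT qX1 qX2 Wch y x1 x2 s1 t - hS2cS1 qS s1 s2) :
    OSN2 qS qX2 Wch s1 t x1 y ≤ (2:ℝ)^(-γ) * (qS.p (s1, s2) * (Wch x1 x2).p y) := by
  obtain ⟨hq, ht, ha1, ha2, hW⟩ := qMAC_factors qS qT qX1 qX2 Wch hpos
  have hB := mX1X2S1T_pos qS qT qX1 qX2 Wch hpos
  have hM := mgS1_pos qS qT qX1 qX2 Wch hpos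
  have hN := OSN2_pos qS qT qX1 qX2 Wch hpos
  have hiden : iYX2cX1S1T qS qT qX1 qX2 Wch y x1 x2 s1 t
      = Real.logb 2 ((Wch x1 x2).p y * mgS1 qS s1 / OSN2 qS qX2 Wch s1 t x1 y) := by
    unfold iYX2cX1S1T
    rw [mar_YX1X2S1T, mar_X1S1T, mar_YX1S1T]
    congr 1
    field_simp
  have hsum : iYX2cX1S1T qS qT qX1 qX2 Wch y x1 x2 s1 t - hS2cS1 qS s1 s2
      = Real.logb 2 (qS.p (s1, s2) * (Wch x1 x2).p y / OSN2 qS qX2 Wch s1 t x1 y) := by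
    unfold hS2cS1
    rw [hiden, sub_neg_eq_add, ← Real.logb_mul (by positivity) (by positivity)]
    congr 1
    field_simp
  rw [hsum] at hc
  exact N_le_of_cond hN (by positivity) hc

lemma Tcond3 {γ : ℝ} {s1 : S1} {s2 : S2} {t : T} {x1 : X1} {x2 : X2} {y : Y}
    (hpos : 0 < qMAC qS qT qX1 qX2 Wch s1 s2 t x1 x2 y)
    (hc : γ ≤ iYX1X2cKT qS qT qX1 qX2 Wch k1 y x1 x2 (k1 s1) t - hS1S2cK qS k1 s1 s2) :
    OSN3 qS qX1 qX2 Wch k1 (k1 s1) t y ≤ (2:ℝ)^(-γ) * (qS.p (s1, s2) * (Wch x1 x2).p y) := by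
  obtain ⟨hq, ht, ha1, ha2, hW⟩ := qMAC_factors qS qT qX1 qX2 Wch hpos
  have hB := mX1X2KT_pos qS qT qX1 qX2 Wch k1 hpos
  have hM := mgK_pos qS qT qX1 qX2 Wch k1 hpos
  have hN := OSN3_pos qS qT qX1 qX2 Wch k1 hpos
  have hiden : iYX1X2cKT qS qT qX1 qX2 Wch k1 y x1 x2 (k1 s1) t
      = Real.logb 2 ((Wch x1 x2).p y * mgK qS k1 (k1 s1) / OSN3 qS qX1 qX2 Wch k1 (k1 s1) t y) := by
    unfold iYX1X2cKT
    rw [mar_YX1X2KT, mar_KT, mar_YKT]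
    congr 1
    field_simp
  have hsum : iYX1X2cKT qS qT qX1 qX2 Wch k1 y x1 x2 (k1 s1) t - hS1S2cK qS k1 s1 s2
      = Real.logb 2 (qS.p (s1, s2) * (Wch x1 x2).p y / OSN3 qS qX1 qX2 Wch k1 (k1 s1) t y) := by
    unfold hS1S2cK
    rw [hiden, sub_neg_eq_add, ← Real.logb_mul (by positivity) (by positivity)]
    congr 1
    field_simp
  rw [hsum] at hc
  exact N_le_of_cond hN (by positivity) hc

lemma Tcond4 {γ : ℝ} {s1 : S1} {s2 : S2} {t : T} {x1 : X1} {x2 : X2} {y : Y}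
    (hpos : 0 < qMAC qS qT qX1 qX2 Wch s1 s2 t x1 x2 y)
    (hc : γ ≤ iYX1X2 qS qT qX1 qX2 Wch y x1 x2 - hS1S2 qS s1 s2) :
    mY qS qT qX1 qX2 Wch y ≤ (2:ℝ)^(-γ) * (qS.p (s1, s2) * (Wch x1 x2).p y) := by
  obtain ⟨hq, ht, ha1, ha2, hW⟩ := qMAC_factors qS qT qX1 qX2 Wch hpos
  have hB := mX1X2_pos qS qT qX1 qX2 Wch hpos
  have hN := mY_pos qS qT qX1 qX2 Wch hpos
  have hiden : iYX1X2 qS qT qX1 qX2 Wch y x1 x2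
      = Real.logb 2 ((Wch x1 x2).p y / mY qS qT qX1 qX2 Wch y) := by
    unfold iYX1X2
    rw [mar_YX1X2]
    congr 1
    field_simp
  have hsum : iYX1X2 qS qT qX1 qX2 Wch y x1 x2 - hS1S2 qS s1 s2
      = Real.logb 2 (qS.p (s1, s2) * (Wch x1 x2).p y / mY qS qT qX1 qX2 Wch y) := by
    unfold hS1S2
    rw [hiden, sub_neg_eq_add, ← Real.logb_mul (by positivity) (by positivity)]
    congr 1
    field_simp
  rw [hsum] at hc
  exact N_le_of_cond hN (by positivity) hc

end MainDev2

/- ===================== Codebook expectation lemmas ===================== -/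

section EngineDerived

variable {α β : Type} [Fintype α] [Fintype β] [DecidableEq α] [DecidableEq β]

lemma engineE1a (b : α → β → ℝ) (hb : ∀ u, ∑ v, b u v = 1) (s : α) (a : β) :
    ∑ c : α → β, (∏ u, b u (c u)) * ind (c s = a) = b s a := by
  rw [engine1 b hb s (fun v => ind (v = a))]
  rw [Finset.sum_congr rfl fun x _ => mul_comm (b s x) (ind (x = a))]
  exact sum_ind_collapse2 a (b s)

lemma engineE1b (b : α → β → ℝ) (hb : ∀ u, ∑ v, b u v = 1) (s : α) (a : β) (H : β → ℝ) :
    ∑ c : α → β, (∏ u, b u (c u)) * (ind (c s = a) * H (c s)) = b s a * H a := by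
  rw [engine1 b hb s (fun v => ind (v = a) * H v)]
  rw [Finset.sum_congr rfl fun x _ => (by ring :
    b s x * (ind (x = a) * H x) = ind (x = a) * (b s x * H x))]
  exact sum_ind_collapse2 a (fun x => b s x * H x)

lemma engineE2b (b : α → β → ℝ) (hb : ∀ u, ∑ v, b u v = 1) (s s' : α) (hss : s ≠ s')
    (a : β) (Φ : β → β → ℝ) :
    ∑ c : α → β, (∏ u, b u (c u)) * (ind (c s = a) * Φ (c s) (c s'))
      = b s a * ∑ x', b s' x' * Φ a x' := by
  rw [engine2 b hb s s' hss (fun v v' => ind (v = a) * Φ v v')]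
  have hx : ∀ x, ∑ x', b s x * b s' x' * (ind (x = a) * Φ x x')
      = ind (x = a) * (b s x * ∑ x', b s' x' * Φ x x') := by
    intro x
    rw [Finset.mul_sum, Finset.mul_sum]
    exact Finset.sum_congr rfl fun x' _ => by ring
  rw [Finset.sum_congr rfl fun x _ => hx x]
  rw [sum_ind_collapse2 a (fun x => b s x * ∑ x', b s' x' * Φ x x')]

end EngineDerived

section MainDev3

variable [DecidableEq S1] [DecidableEq S2] [DecidableEq K]
  [DecidableEq T] [DecidableEq X1] [DecidableEq X2]

variable (qS : FinPMF (S1 × S2)) (qT : FinPMF T) (qX1 : S1 → T → FinPMF X1)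
  (qX2 : S2 → T → FinPMF X2) (Wch : X1 → X2 → FinPMF Y) (k1 : S1 → K) (k2 : S2 → K)

/-- The measure `OScbW` restricted by the three "pinning" indicators, integrated
against a function of the codewords. -/
lemma OSmass (s1 : S1) (s2 : S2) (t : T) (x1 : X1) (x2 : X2) (hkk : k2 s2 = k1 s1) :
    ∑ tb : K → T, ∑ c1 : S1 → X1, ∑ c2 : S2 → X2, OScbW qT qX1 qX2 k1 k2 tb c1 c2 *
      (ind (tb (k1 s1) = t) * (ind (c1 s1 = x1) * ind (c2 s2 = x2)))
    = qT.p t * ((qX1 s1 t).p x1 * (qX2 s2 t).p x2) := by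
  unfold OScbW
  have step : ∀ tb : K → T,
      ∑ c1 : S1 → X1, ∑ c2 : S2 → X2,
        ((∏ k, qT.p (tb k)) * ((∏ u, (qX1 u (tb (k1 u))).p (c1 u)) *
          (∏ u, (qX2 u (tb (k2 u))).p (c2 u)))) *
        (ind (tb (k1 s1) = t) * (ind (c1 s1 = x1) * ind (c2 s2 = x2)))
      = (∏ k, qT.p (tb k)) * (ind (tb (k1 s1) = t) *
          ((qX1 s1 (tb (k1 s1))).p x1 * (qX2 s2 (tb (k1 s1))).p x2)) := by
    intro tb
    have hc2 : ∀ c1 : S1 → X1,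
        ∑ c2 : S2 → X2,
          ((∏ k, qT.p (tb k)) * ((∏ u, (qX1 u (tb (k1 u))).p (c1 u)) *
            (∏ u, (qX2 u (tb (k2 u))).p (c2 u)))) *
          (ind (tb (k1 s1) = t) * (ind (c1 s1 = x1) * ind (c2 s2 = x2)))
        = ((∏ k, qT.p (tb k)) * (ind (tb (k1 s1) = t) *
            ((∏ u, (qX1 u (tb (k1 u))).p (c1 u)) * ind (c1 s1 = x1)))) *
          (qX2 s2 (tb (k2 s2))).p x2 := by
      intro c1
      rw [Finset.sum_congr rfl fun c2 _ => (by ring :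
        ((∏ k, qT.p (tb k)) * ((∏ u, (qX1 u (tb (k1 u))).p (c1 u)) *
            (∏ u, (qX2 u (tb (k2 u))).p (c2 u)))) *
          (ind (tb (k1 s1) = t) * (ind (c1 s1 = x1) * ind (c2 s2 = x2)))
        = ((∏ k, qT.p (tb k)) * (ind (tb (k1 s1) = t) *
            ((∏ u, (qX1 u (tb (k1 u))).p (c1 u)) * ind (c1 s1 = x1)))) *
          ((∏ u, (qX2 u (tb (k2 u))).p (c2 u)) * ind (c2 s2 = x2)))]
      rw [← Finset.mul_sum]
      rw [engineE1a (fun u v => (qX2 u (tb (k2 u))).p v)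
        (fun u => (qX2 u (tb (k2 u))).sum_eq_one) s2 x2]
    rw [Finset.sum_congr rfl fun c1 _ => hc2 c1]
    rw [← Finset.sum_mul]
    rw [Finset.sum_congr rfl fun c1 _ => (by ring :
      ((∏ k, qT.p (tb k)) * (ind (tb (k1 s1) = t) *
          ((∏ u, (qX1 u (tb (k1 u))).p (c1 u)) * ind (c1 s1 = x1))))
      = ((∏ k, qT.p (tb k)) * ind (tb (k1 s1) = t)) *
          ((∏ u, (qX1 u (tb (k1 u))).p (c1 u)) * ind (c1 s1 = x1)))]
    rw [← Finset.mul_sum]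
    rw [engineE1a (fun u v => (qX1 u (tb (k1 u))).p v)
      (fun u => (qX1 u (tb (k1 u))).sum_eq_one) s1 x1]
    rw [hkk]
    ring
  rw [Finset.sum_congr rfl fun tb _ => step tb]
  rw [engineE1b (fun _ v => qT.p v) (fun _ => qT.sum_eq_one) (k1 s1) t
    (fun v => (qX1 s1 v).p x1 * (qX2 s2 v).p x2)]

lemma OSM1 (s1 : S1) (s2 : S2) (t : T) (x1 : X1) (x2 : X2) (s1' : S1) (g : X1 → ℝ)
    (hne : ¬ s1' = s1) (hk1' : k1 s1' = k1 s1) (hkk : k2 s2 = k1 s1) :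
    ∑ tb : K → T, ∑ c1 : S1 → X1, ∑ c2 : S2 → X2, OScbW qT qX1 qX2 k1 k2 tb c1 c2 *
      (ind (tb (k1 s1) = t) * (ind (c1 s1 = x1) * (ind (c2 s2 = x2) * g (c1 s1'))))
    = qT.p t * ((qX1 s1 t).p x1 * ((qX2 s2 t).p x2 * ∑ x', (qX1 s1' t).p x' * g x')) := by
  unfold OScbW
  have step : ∀ tb : K → T,
      ∑ c1 : S1 → X1, ∑ c2 : S2 → X2,
        ((∏ k, qT.p (tb k)) * ((∏ u, (qX1 u (tb (k1 u))).p (c1 u)) *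
          (∏ u, (qX2 u (tb (k2 u))).p (c2 u)))) *
        (ind (tb (k1 s1) = t) * (ind (c1 s1 = x1) * (ind (c2 s2 = x2) * g (c1 s1'))))
      = (∏ k, qT.p (tb k)) * (ind (tb (k1 s1) = t) *
          ((qX1 s1 (tb (k1 s1))).p x1 * ((qX2 s2 (tb (k1 s1))).p x2 *
            ∑ x', (qX1 s1' (tb (k1 s1))).p x' * g x'))) := by
    intro tb
    have hc2 : ∀ c1 : S1 → X1,
        ∑ c2 : S2 → X2,
          ((∏ k, qT.p (tb k)) * ((∏ u, (qX1 u (tb (k1 u))).p (c1 u)) *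
            (∏ u, (qX2 u (tb (k2 u))).p (c2 u)))) *
          (ind (tb (k1 s1) = t) * (ind (c1 s1 = x1) * (ind (c2 s2 = x2) * g (c1 s1'))))
        = ((∏ k, qT.p (tb k)) * (ind (tb (k1 s1) = t) *
            ((∏ u, (qX1 u (tb (k1 u))).p (c1 u)) * (ind (c1 s1 = x1) * g (c1 s1'))))) *
          (qX2 s2 (tb (k2 s2))).p x2 := by
      intro c1
      rw [Finset.sum_congr rfl fun c2 _ => (by ring :
        ((∏ k, qT.p (tb k)) * ((∏ u, (qX1 u (tb (k1 u))).p (c1 u)) *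
            (∏ u, (qX2 u (tb (k2 u))).p (c2 u)))) *
          (ind (tb (k1 s1) = t) * (ind (c1 s1 = x1) * (ind (c2 s2 = x2) * g (c1 s1'))))
        = ((∏ k, qT.p (tb k)) * (ind (tb (k1 s1) = t) *
            ((∏ u, (qX1 u (tb (k1 u))).p (c1 u)) * (ind (c1 s1 = x1) * g (c1 s1'))))) *
          ((∏ u, (qX2 u (tb (k2 u))).p (c2 u)) * ind (c2 s2 = x2)))]
      rw [← Finset.mul_sum]
      rw [engineE1a (fun u v => (qX2 u (tb (k2 u))).p v)
        (fun u => (qX2 u (tb (k2 u))).sum_eq_one) s2 x2]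
    rw [Finset.sum_congr rfl fun c1 _ => hc2 c1]
    rw [← Finset.sum_mul]
    rw [Finset.sum_congr rfl fun c1 _ => (by ring :
      ((∏ k, qT.p (tb k)) * (ind (tb (k1 s1) = t) *
          ((∏ u, (qX1 u (tb (k1 u))).p (c1 u)) * (ind (c1 s1 = x1) * g (c1 s1')))))
      = ((∏ k, qT.p (tb k)) * ind (tb (k1 s1) = t)) *
          ((∏ u, (qX1 u (tb (k1 u))).p (c1 u)) * (ind (c1 s1 = x1) * g (c1 s1'))))]
    rw [← Finset.mul_sum]
    rw [engineE2b (fun u v => (qX1 u (tb (k1 u))).p v)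
      (fun u => (qX1 u (tb (k1 u))).sum_eq_one) s1 s1'
      (fun h => hne h.symm) x1 (fun _ v' => g v')]
    rw [hkk, hk1']
    ring
  rw [Finset.sum_congr rfl fun tb _ => step tb]
  rw [engineE1b (fun _ v => qT.p v) (fun _ => qT.sum_eq_one) (k1 s1) t
    (fun v => (qX1 s1 v).p x1 * ((qX2 s2 v).p x2 * ∑ x', (qX1 s1' v).p x' * g x'))]

lemma OSM2 (s1 : S1) (s2 : S2) (t : T) (x1 : X1) (x2 : X2) (s2' : S2) (g : X2 → ℝ)
    (hne : ¬ s2' = s2) (hk2' : k2 s2' = k1 s1) (hkk : k2 s2 = k1 s1) :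
    ∑ tb : K → T, ∑ c1 : S1 → X1, ∑ c2 : S2 → X2, OScbW qT qX1 qX2 k1 k2 tb c1 c2 *
      (ind (tb (k1 s1) = t) * (ind (c1 s1 = x1) * (ind (c2 s2 = x2) * g (c2 s2'))))
    = qT.p t * ((qX1 s1 t).p x1 * ((qX2 s2 t).p x2 * ∑ x', (qX2 s2' t).p x' * g x')) := by
  unfold OScbW
  have step : ∀ tb : K → T,
      ∑ c1 : S1 → X1, ∑ c2 : S2 → X2,
        ((∏ k, qT.p (tb k)) * ((∏ u, (qX1 u (tb (k1 u))).p (c1 u)) *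
          (∏ u, (qX2 u (tb (k2 u))).p (c2 u)))) *
        (ind (tb (k1 s1) = t) * (ind (c1 s1 = x1) * (ind (c2 s2 = x2) * g (c2 s2'))))
      = (∏ k, qT.p (tb k)) * (ind (tb (k1 s1) = t) *
          ((qX1 s1 (tb (k1 s1))).p x1 * ((qX2 s2 (tb (k1 s1))).p x2 *
            ∑ x', (qX2 s2' (tb (k1 s1))).p x' * g x'))) := by
    intro tb
    have hc2 : ∀ c1 : S1 → X1,
        ∑ c2 : S2 → X2,
          ((∏ k, qT.p (tb k)) * ((∏ u, (qX1 u (tb (k1 u))).p (c1 u)) *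
            (∏ u, (qX2 u (tb (k2 u))).p (c2 u)))) *
          (ind (tb (k1 s1) = t) * (ind (c1 s1 = x1) * (ind (c2 s2 = x2) * g (c2 s2'))))
        = ((∏ k, qT.p (tb k)) * (ind (tb (k1 s1) = t) *
            ((∏ u, (qX1 u (tb (k1 u))).p (c1 u)) * ind (c1 s1 = x1)))) *
          ((qX2 s2 (tb (k2 s2))).p x2 * ∑ x', (qX2 s2' (tb (k2 s2'))).p x' * g x') := by
      intro c1
      rw [Finset.sum_congr rfl fun c2 _ => (by ring :
        ((∏ k, qT.p (tb k)) * ((∏ u, (qX1 u (tb (k1 u))).p (c1 u)) *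
            (∏ u, (qX2 u (tb (k2 u))).p (c2 u)))) *
          (ind (tb (k1 s1) = t) * (ind (c1 s1 = x1) * (ind (c2 s2 = x2) * g (c2 s2'))))
        = ((∏ k, qT.p (tb k)) * (ind (tb (k1 s1) = t) *
            ((∏ u, (qX1 u (tb (k1 u))).p (c1 u)) * ind (c1 s1 = x1)))) *
          ((∏ u, (qX2 u (tb (k2 u))).p (c2 u)) * (ind (c2 s2 = x2) * g (c2 s2'))))]
      rw [← Finset.mul_sum]
      rw [engineE2b (fun u v => (qX2 u (tb (k2 u))).p v)
        (fun u => (qX2 u (tb (k2 u))).sum_eq_one) s2 s2'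
        (fun h => hne h.symm) x2 (fun _ v' => g v')]
    rw [Finset.sum_congr rfl fun c1 _ => hc2 c1]
    rw [← Finset.sum_mul]
    rw [Finset.sum_congr rfl fun c1 _ => (by ring :
      ((∏ k, qT.p (tb k)) * (ind (tb (k1 s1) = t) *
          ((∏ u, (qX1 u (tb (k1 u))).p (c1 u)) * ind (c1 s1 = x1))))
      = ((∏ k, qT.p (tb k)) * ind (tb (k1 s1) = t)) *
          ((∏ u, (qX1 u (tb (k1 u))).p (c1 u)) * ind (c1 s1 = x1)))]
    rw [← Finset.mul_sum]
    rw [engineE1a (fun u v => (qX1 u (tb (k1 u))).p v)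
      (fun u => (qX1 u (tb (k1 u))).sum_eq_one) s1 x1]
    rw [hkk, hk2']
    ring
  rw [Finset.sum_congr rfl fun tb _ => step tb]
  rw [engineE1b (fun _ v => qT.p v) (fun _ => qT.sum_eq_one) (k1 s1) t
    (fun v => (qX1 s1 v).p x1 * ((qX2 s2 v).p x2 * ∑ x', (qX2 s2' v).p x' * g x'))]

lemma OSM3 (s1 : S1) (s2 : S2) (t : T) (x1 : X1) (x2 : X2) (s1' : S1) (s2' : S2)
    (g : X1 → X2 → ℝ) (hne1 : ¬ s1' = s1) (hne2 : ¬ s2' = s2)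
    (hk1' : k1 s1' = k1 s1) (hk2' : k2 s2' = k1 s1) (hkk : k2 s2 = k1 s1) :
    ∑ tb : K → T, ∑ c1 : S1 → X1, ∑ c2 : S2 → X2, OScbW qT qX1 qX2 k1 k2 tb c1 c2 *
      (ind (tb (k1 s1) = t) * (ind (c1 s1 = x1) * (ind (c2 s2 = x2) * g (c1 s1') (c2 s2'))))
    = qT.p t * ((qX1 s1 t).p x1 * ((qX2 s2 t).p x2 *
        ∑ x1', (qX1 s1' t).p x1' * ∑ x2', (qX2 s2' t).p x2' * g x1' x2')) := by
  unfold OScbW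
  have step : ∀ tb : K → T,
      ∑ c1 : S1 → X1, ∑ c2 : S2 → X2,
        ((∏ k, qT.p (tb k)) * ((∏ u, (qX1 u (tb (k1 u))).p (c1 u)) *
          (∏ u, (qX2 u (tb (k2 u))).p (c2 u)))) *
        (ind (tb (k1 s1) = t) * (ind (c1 s1 = x1) * (ind (c2 s2 = x2) * g (c1 s1') (c2 s2'))))
      = (∏ k, qT.p (tb k)) * (ind (tb (k1 s1) = t) *
          ((qX1 s1 (tb (k1 s1))).p x1 * ((qX2 s2 (tb (k1 s1))).p x2 *
            ∑ x1', (qX1 s1' (tb (k1 s1))).p x1' *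
              ∑ x2', (qX2 s2' (tb (k1 s1))).p x2' * g x1' x2'))) := by
    intro tb
    have hc2 : ∀ c1 : S1 → X1,
        ∑ c2 : S2 → X2,
          ((∏ k, qT.p (tb k)) * ((∏ u, (qX1 u (tb (k1 u))).p (c1 u)) *
            (∏ u, (qX2 u (tb (k2 u))).p (c2 u)))) *
          (ind (tb (k1 s1) = t) * (ind (c1 s1 = x1) * (ind (c2 s2 = x2) * g (c1 s1') (c2 s2'))))
        = ((∏ k, qT.p (tb k)) * (ind (tb (k1 s1) = t) *
            ((∏ u, (qX1 u (tb (k1 u))).p (c1 u)) * (ind (c1 s1 = x1) *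
              (∑ x2', (qX2 s2' (tb (k2 s2'))).p x2' * g (c1 s1') x2'))))) *
          (qX2 s2 (tb (k2 s2))).p x2 := by
      intro c1
      rw [Finset.sum_congr rfl fun c2 _ => (by ring :
        ((∏ k, qT.p (tb k)) * ((∏ u, (qX1 u (tb (k1 u))).p (c1 u)) *
            (∏ u, (qX2 u (tb (k2 u))).p (c2 u)))) *
          (ind (tb (k1 s1) = t) * (ind (c1 s1 = x1) * (ind (c2 s2 = x2) * g (c1 s1') (c2 s2'))))
        = ((∏ k, qT.p (tb k)) * (ind (tb (k1 s1) = t) *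
            ((∏ u, (qX1 u (tb (k1 u))).p (c1 u)) * ind (c1 s1 = x1)))) *
          ((∏ u, (qX2 u (tb (k2 u))).p (c2 u)) * (ind (c2 s2 = x2) * g (c1 s1') (c2 s2'))))]
      rw [← Finset.mul_sum]
      rw [engineE2b (fun u v => (qX2 u (tb (k2 u))).p v)
        (fun u => (qX2 u (tb (k2 u))).sum_eq_one) s2 s2'
        (fun h => hne2 h.symm) x2 (fun _ v' => g (c1 s1') v')]
      ring
    rw [Finset.sum_congr rfl fun c1 _ => hc2 c1]
    rw [← Finset.sum_mul]
    rw [Finset.sum_congr rfl fun c1 _ => (by ring :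
      ((∏ k, qT.p (tb k)) * (ind (tb (k1 s1) = t) *
          ((∏ u, (qX1 u (tb (k1 u))).p (c1 u)) * (ind (c1 s1 = x1) *
            (∑ x2', (qX2 s2' (tb (k2 s2'))).p x2' * g (c1 s1') x2')))))
      = ((∏ k, qT.p (tb k)) * ind (tb (k1 s1) = t)) *
          ((∏ u, (qX1 u (tb (k1 u))).p (c1 u)) * (ind (c1 s1 = x1) *
            (∑ x2', (qX2 s2' (tb (k2 s2'))).p x2' * g (c1 s1') x2'))))]
    rw [← Finset.mul_sum]
    rw [engineE2b (fun u v => (qX1 u (tb (k1 u))).p v)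
      (fun u => (qX1 u (tb (k1 u))).sum_eq_one) s1 s1'
      (fun h => hne1 h.symm) x1
      (fun _ v' => ∑ x2', (qX2 s2' (tb (k2 s2'))).p x2' * g v' x2')]
    rw [hkk, hk1', hk2']
    ring
  rw [Finset.sum_congr rfl fun tb _ => step tb]
  rw [engineE1b (fun _ v => qT.p v) (fun _ => qT.sum_eq_one) (k1 s1) t
    (fun v => (qX1 s1 v).p x1 * ((qX2 s2 v).p x2 *
      ∑ x1', (qX1 s1' v).p x1' * ∑ x2', (qX2 s2' v).p x2' * g x1' x2'))]

lemma OSM4 (s1 : S1) (s2 : S2) (t : T) (x1 : X1) (x2 : X2) (s1' : S1) (s2' : S2)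
    (g : X1 → X2 → ℝ) (hne1 : ¬ s1' = s1) (hne2 : ¬ s2' = s2)
    (hkne : ¬ k1 s1' = k1 s1) (hk2' : k2 s2' = k1 s1') (hkk : k2 s2 = k1 s1) :
    ∑ tb : K → T, ∑ c1 : S1 → X1, ∑ c2 : S2 → X2, OScbW qT qX1 qX2 k1 k2 tb c1 c2 *
      (ind (tb (k1 s1) = t) * (ind (c1 s1 = x1) * (ind (c2 s2 = x2) * g (c1 s1') (c2 s2'))))
    = qT.p t * ((qX1 s1 t).p x1 * ((qX2 s2 t).p x2 *
        ∑ t', qT.p t' *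
          ∑ x1', (qX1 s1' t').p x1' * ∑ x2', (qX2 s2' t').p x2' * g x1' x2')) := by
  unfold OScbW
  have step : ∀ tb : K → T,
      ∑ c1 : S1 → X1, ∑ c2 : S2 → X2,
        ((∏ k, qT.p (tb k)) * ((∏ u, (qX1 u (tb (k1 u))).p (c1 u)) *
          (∏ u, (qX2 u (tb (k2 u))).p (c2 u)))) *
        (ind (tb (k1 s1) = t) * (ind (c1 s1 = x1) * (ind (c2 s2 = x2) * g (c1 s1') (c2 s2'))))
      = (∏ k, qT.p (tb k)) * (ind (tb (k1 s1) = t) *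
          (((qX1 s1 (tb (k1 s1))).p x1 * ((qX2 s2 (tb (k1 s1))).p x2 *
            (∑ x1', (qX1 s1' (tb (k1 s1'))).p x1' *
              ∑ x2', (qX2 s2' (tb (k1 s1'))).p x2' * g x1' x2'))))) := by
    intro tb
    have hc2 : ∀ c1 : S1 → X1,
        ∑ c2 : S2 → X2,
          ((∏ k, qT.p (tb k)) * ((∏ u, (qX1 u (tb (k1 u))).p (c1 u)) *
            (∏ u, (qX2 u (tb (k2 u))).p (c2 u)))) *
          (ind (tb (k1 s1) = t) * (ind (c1 s1 = x1) * (ind (c2 s2 = x2) * g (c1 s1') (c2 s2'))))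
        = ((∏ k, qT.p (tb k)) * (ind (tb (k1 s1) = t) *
            ((∏ u, (qX1 u (tb (k1 u))).p (c1 u)) * (ind (c1 s1 = x1) *
              (∑ x2', (qX2 s2' (tb (k2 s2'))).p x2' * g (c1 s1') x2'))))) *
          (qX2 s2 (tb (k2 s2))).p x2 := by
      intro c1
      rw [Finset.sum_congr rfl fun c2 _ => (by ring :
        ((∏ k, qT.p (tb k)) * ((∏ u, (qX1 u (tb (k1 u))).p (c1 u)) *
            (∏ u, (qX2 u (tb (k2 u))).p (c2 u)))) *
          (ind (tb (k1 s1) = t) * (ind (c1 s1 = x1) * (ind (c2 s2 = x2) * g (c1 s1') (c2 s2'))))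
        = ((∏ k, qT.p (tb k)) * (ind (tb (k1 s1) = t) *
            ((∏ u, (qX1 u (tb (k1 u))).p (c1 u)) * ind (c1 s1 = x1)))) *
          ((∏ u, (qX2 u (tb (k2 u))).p (c2 u)) * (ind (c2 s2 = x2) * g (c1 s1') (c2 s2'))))]
      rw [← Finset.mul_sum]
      rw [engineE2b (fun u v => (qX2 u (tb (k2 u))).p v)
        (fun u => (qX2 u (tb (k2 u))).sum_eq_one) s2 s2'
        (fun h => hne2 h.symm) x2 (fun _ v' => g (c1 s1') v')]
      ring
    rw [Finset.sum_congr rfl fun c1 _ => hc2 c1]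
    rw [← Finset.sum_mul]
    rw [Finset.sum_congr rfl fun c1 _ => (by ring :
      ((∏ k, qT.p (tb k)) * (ind (tb (k1 s1) = t) *
          ((∏ u, (qX1 u (tb (k1 u))).p (c1 u)) * (ind (c1 s1 = x1) *
            (∑ x2', (qX2 s2' (tb (k2 s2'))).p x2' * g (c1 s1') x2')))))
      = ((∏ k, qT.p (tb k)) * ind (tb (k1 s1) = t)) *
          ((∏ u, (qX1 u (tb (k1 u))).p (c1 u)) * (ind (c1 s1 = x1) *
            (∑ x2', (qX2 s2' (tb (k2 s2'))).p x2' * g (c1 s1') x2'))))]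
    rw [← Finset.mul_sum]
    rw [engineE2b (fun u v => (qX1 u (tb (k1 u))).p v)
      (fun u => (qX1 u (tb (k1 u))).sum_eq_one) s1 s1'
      (fun h => hne1 h.symm) x1
      (fun _ v' => ∑ x2', (qX2 s2' (tb (k2 s2'))).p x2' * g v' x2')]
    rw [hkk, hk2']
    ring
  rw [Finset.sum_congr rfl fun tb _ => step tb]
  have hreshape : ∀ tb : K → T,
      (∏ k, qT.p (tb k)) * (ind (tb (k1 s1) = t) *
          (((qX1 s1 (tb (k1 s1))).p x1 * ((qX2 s2 (tb (k1 s1))).p x2 *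
            (∑ x1', (qX1 s1' (tb (k1 s1'))).p x1' *
              ∑ x2', (qX2 s2' (tb (k1 s1'))).p x2' * g x1' x2')))))
      = (∏ k, qT.p (tb k)) * (ind (tb (k1 s1) = t) *
          ((fun v v' => (qX1 s1 v).p x1 * ((qX2 s2 v).p x2 *
            (∑ x1', (qX1 s1' v').p x1' * ∑ x2', (qX2 s2' v').p x2' * g x1' x2')))
              (tb (k1 s1)) (tb (k1 s1')))) := fun tb => rfl
  rw [Finset.sum_congr rfl fun tb _ => hreshape tb]
  rw [engineE2b (fun _ v => qT.p v) (fun _ => qT.sum_eq_one) (k1 s1) (k1 s1')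
    (fun h => hkne h.symm) t
    (fun v v' => (qX1 s1 v).p x1 * ((qX2 s2 v).p x2 *
      (∑ x1', (qX1 s1' v').p x1' * ∑ x2', (qX2 s2' v').p x2' * g x1' x2')))]
  congr 1
  rw [Finset.mul_sum, Finset.mul_sum]
  exact Finset.sum_congr rfl fun t' _ => by ring

end MainDev3

/- ===================== Expectation bounds for the error classes ===================== -/

section SwapHelpers

variable {A B C D E : Type} [Fintype A] [Fintype B] [Fintype C] [Fintype D] [Fintype E]

lemma sum_swap3 (f : A → B → C → D → ℝ) :
    ∑ a, ∑ b, ∑ c, ∑ d, f a b c d = ∑ d, ∑ a, ∑ b, ∑ c, f a b c d := by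
  calc ∑ a, ∑ b, ∑ c, ∑ d, f a b c d
      = ∑ a, ∑ b, ∑ d, ∑ c, f a b c d :=
        Finset.sum_congr rfl fun a _ => Finset.sum_congr rfl fun b _ => Finset.sum_comm
    _ = ∑ a, ∑ d, ∑ b, ∑ c, f a b c d :=
        Finset.sum_congr rfl fun a _ => Finset.sum_comm
    _ = ∑ d, ∑ a, ∑ b, ∑ c, f a b c d := Finset.sum_comm

lemma sum_swap32 (f : A → B → C → D → E → ℝ) :
    ∑ a, ∑ b, ∑ c, ∑ d, ∑ e, f a b c d e = ∑ d, ∑ e, ∑ a, ∑ b, ∑ c, f a b c d e :=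
  (sum_swap3 (fun a b c d => ∑ e, f a b c d e)).trans
    (Finset.sum_congr rfl fun d _ => sum_swap3 (fun a b c e => f a b c d e))

lemma sum_pull_const {α : Type} [Fintype α] (C : ℝ) (f g : α → ℝ) (h : ∀ x, f x = C * g x) :
    ∑ x, f x = C * ∑ x, g x := by
  rw [Finset.mul_sum]
  exact Finset.sum_congr rfl fun x _ => h x

end SwapHelpers

section MoreHelpers

variable {A B C D E F : Type} [Fintype A] [Fintype B] [Fintype C] [Fintype D] [Fintype E]
  [Fintype F]

lemma sum_swap33 (f : A → B → C → D → E → F → ℝ) :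
    ∑ a, ∑ b, ∑ c, ∑ d, ∑ e, ∑ x, f a b c d e x
      = ∑ d, ∑ e, ∑ x, ∑ a, ∑ b, ∑ c, f a b c d e x :=
  (sum_swap3 (fun a b c d => ∑ e, ∑ x, f a b c d e x)).trans
    (Finset.sum_congr rfl fun d _ =>
      (sum_swap3 (fun a b c e => ∑ x, f a b c d e x)).trans
        (Finset.sum_congr rfl fun e _ => sum_swap3 (fun a b c x => f a b c d e x)))

lemma pull3 (C0 : ℝ) (f g : A → B → C → ℝ) (h : ∀ a b c, f a b c = C0 * g a b c) :
    ∑ a, ∑ b, ∑ c, f a b c = C0 * ∑ a, ∑ b, ∑ c, g a b c := by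
  have h2 : ∀ a b, ∑ c, f a b c = C0 * ∑ c, g a b c :=
    fun a b => sum_pull_const _ _ _ (fun c => h a b c)
  have h1 : ∀ a, ∑ b, ∑ c, f a b c = C0 * ∑ b, ∑ c, g a b c := by
    intro a
    rw [Finset.sum_congr rfl fun b _ => h2 a b]
    exact sum_pull_const _ _ _ (fun b => rfl)
  rw [Finset.sum_congr rfl fun a _ => h1 a]
  exact sum_pull_const _ _ _ (fun a => rfl)

lemma collapse3 (a : A) (b : B) (c : C) (H : A → B → C → ℝ) :
    ∑ t, ∑ u, ∑ v, ind (a = t) * (ind (b = u) * (ind (c = v) * H t u v)) = H a b c := by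
  have h2 : ∀ t u, ∑ v, ind (a = t) * (ind (b = u) * (ind (c = v) * H t u v))
      = (ind (a = t) * ind (b = u)) * H t u c := by
    intro t u
    rw [sum_pull_const (ind (a = t) * ind (b = u)) _
      (fun v => ind (c = v) * H t u v) (fun v => by ring)]
    rw [sum_ind_collapse c (fun v => H t u v)]
  rw [Finset.sum_congr rfl fun t _ => Finset.sum_congr rfl fun u _ => h2 t u]
  have h1 : ∀ t, ∑ u, (ind (a = t) * ind (b = u)) * H t u c
      = ind (a = t) * H t b c := by
    intro t
    rw [sum_pull_const (ind (a = t)) _ (fun u => ind (b = u) * H t u c) (fun u => by ring)]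
    rw [sum_ind_collapse b (fun u => H t u c)]
  rw [Finset.sum_congr rfl fun t _ => h1 t]
  rw [sum_ind_collapse a (fun t => H t b c)]

lemma sum_min_le3 (w : A → B → C → ℝ) (hw : ∀ a b c, 0 ≤ w a b c) (A0 : ℝ) (hA : 0 ≤ A0)
    (Λ : A → B → C → ℝ) (m M : ℝ) (hm : ∑ a, ∑ b, ∑ c, w a b c ≤ m)
    (hM : ∑ a, ∑ b, ∑ c, w a b c * Λ a b c ≤ M) :
    ∑ a, ∑ b, ∑ c, w a b c * min A0 (Λ a b c) ≤ min (m * A0) M := by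
  refine le_min ?_ ?_
  · calc ∑ a, ∑ b, ∑ c, w a b c * min A0 (Λ a b c)
        ≤ ∑ a, ∑ b, ∑ c, w a b c * A0 :=
          Finset.sum_le_sum fun a _ => Finset.sum_le_sum fun b _ =>
            Finset.sum_le_sum fun c _ =>
              mul_le_mul_of_nonneg_left (min_le_left _ _) (hw a b c)
      _ = (∑ a, ∑ b, ∑ c, w a b c) * A0 := by
          rw [Finset.sum_mul]
          refine Finset.sum_congr rfl fun a _ => ?_
          rw [Finset.sum_mul]
          refine Finset.sum_congr rfl fun b _ => ?_
          rw [Finset.sum_mul]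
      _ ≤ m * A0 := mul_le_mul_of_nonneg_right hm hA
  · calc ∑ a, ∑ b, ∑ c, w a b c * min A0 (Λ a b c)
        ≤ ∑ a, ∑ b, ∑ c, w a b c * Λ a b c :=
          Finset.sum_le_sum fun a _ => Finset.sum_le_sum fun b _ =>
            Finset.sum_le_sum fun c _ =>
              mul_le_mul_of_nonneg_left (min_le_right _ _) (hw a b c)
      _ ≤ M := hM

end MoreHelpers

section MainDev4

variable [DecidableEq S1] [DecidableEq S2] [DecidableEq K]
  [DecidableEq T] [DecidableEq X1] [DecidableEq X2]

variable (qS : FinPMF (S1 × S2)) (qT : FinPMF T) (qX1 : S1 → T → FinPMF X1)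
  (qX2 : S2 → T → FinPMF X2) (Wch : X1 → X2 → FinPMF Y) (k1 : S1 → K) (k2 : S2 → K)

lemma mY_expand (y : Y) : mY qS qT qX1 qX2 Wch y
    = ∑ s1', ∑ s2', qS.p (s1', s2') * ∑ t', qT.p t' *
        ∑ x1', (qX1 s1' t').p x1' * ∑ x2', (qX2 s2' t').p x2' * (Wch x1' x2').p y := by
  unfold mY qMAC
  refine Finset.sum_congr rfl fun s1 _ => Finset.sum_congr rfl fun s2 _ => ?_
  have e2 : ∀ (t : T) (x1 : X1), ∑ x2, qS.p (s1, s2) * qT.p t * (qX1 s1 t).p x1 *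
        (qX2 s2 t).p x2 * (Wch x1 x2).p y
      = (qS.p (s1, s2) * qT.p t * (qX1 s1 t).p x1) *
          ∑ x2, (qX2 s2 t).p x2 * (Wch x1 x2).p y :=
    fun t x1 => sum_pull_const _ _ _ (fun x2 => by ring)
  have e1 : ∀ t : T, ∑ x1, ∑ x2, qS.p (s1, s2) * qT.p t * (qX1 s1 t).p x1 *
        (qX2 s2 t).p x2 * (Wch x1 x2).p y
      = (qS.p (s1, s2) * qT.p t) *
          ∑ x1, (qX1 s1 t).p x1 * ∑ x2, (qX2 s2 t).p x2 * (Wch x1 x2).p y := by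
    intro t
    rw [Finset.sum_congr rfl fun x1 _ => e2 t x1]
    exact sum_pull_const _ _ _ (fun x1 => by ring)
  rw [Finset.sum_congr rfl fun t _ => e1 t]
  exact sum_pull_const _ _ _ (fun t => by ring)

lemma qMAC_total :
    ∑ s1, ∑ s2, ∑ t, ∑ x1, ∑ x2, ∑ y, qMAC qS qT qX1 qX2 Wch s1 s2 t x1 x2 y = 1 := by
  have step : ∀ s1 s2, ∑ t, ∑ x1, ∑ x2, ∑ y, qMAC qS qT qX1 qX2 Wch s1 s2 t x1 x2 y
      = qS.p (s1, s2) := by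
    intro s1 s2
    unfold qMAC
    have ey : ∀ t x1 x2, ∑ y, qS.p (s1, s2) * qT.p t * (qX1 s1 t).p x1 * (qX2 s2 t).p x2 *
          (Wch x1 x2).p y
        = qS.p (s1, s2) * qT.p t * (qX1 s1 t).p x1 * (qX2 s2 t).p x2 :=
      fun t x1 x2 => sum_mul_pmf' (Wch x1 x2) _ _ (fun y => by ring)
    have ex2 : ∀ t x1, ∑ x2, qS.p (s1, s2) * qT.p t * (qX1 s1 t).p x1 * (qX2 s2 t).p x2
        = qS.p (s1, s2) * qT.p t * (qX1 s1 t).p x1 :=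
      fun t x1 => sum_mul_pmf' (qX2 s2 t) _ _ (fun x2 => by ring)
    have ex1 : ∀ t : T, ∑ x1, qS.p (s1, s2) * qT.p t * (qX1 s1 t).p x1
        = qS.p (s1, s2) * qT.p t :=
      fun t => sum_mul_pmf' (qX1 s1 t) _ _ (fun x1 => by ring)
    rw [Finset.sum_congr rfl fun t _ => Finset.sum_congr rfl fun x1 _ =>
      Finset.sum_congr rfl fun x2 _ => ey t x1 x2]
    rw [Finset.sum_congr rfl fun t _ => Finset.sum_congr rfl fun x1 _ => ex2 t x1]
    rw [Finset.sum_congr rfl fun t _ => ex1 t]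
    exact sum_mul_pmf' qT _ _ (fun t => by ring)
  rw [Finset.sum_congr rfl fun s1 _ => Finset.sum_congr rfl fun s2 _ => step s1 s2]
  rw [← Fintype.sum_prod_type]
  exact qS.sum_eq_one

lemma OSLE1 (s1 : S1) (s2 : S2) (t : T) (x1 : X1) (x2 : X2) (y : Y)
    (hq : 0 < qS.p (s1, s2)) (hk : ∀ a b, 0 < qS.p (a, b) → k1 a = k2 b) :
    ∑ tb : K → T, ∑ c1 : S1 → X1, ∑ c2 : S2 → X2, OScbW qT qX1 qX2 k1 k2 tb c1 c2 *
      (ind (tb (k1 s1) = t) * (ind (c1 s1 = x1) * (ind (c2 s2 = x2) *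
        OSLam1 qS Wch s1 s2 y c1 c2)))
    ≤ qT.p t * ((qX1 s1 t).p x1 * (qX2 s2 t).p x2) * OSN1 qS qX1 Wch s2 t x2 y := by
  have hkk : k2 s2 = k1 s1 := (hk s1 s2 hq).symm
  have expand : ∑ tb : K → T, ∑ c1 : S1 → X1, ∑ c2 : S2 → X2,
      OScbW qT qX1 qX2 k1 k2 tb c1 c2 *
      (ind (tb (k1 s1) = t) * (ind (c1 s1 = x1) * (ind (c2 s2 = x2) *
        OSLam1 qS Wch s1 s2 y c1 c2)))
      = ∑ s1', ∑ tb : K → T, ∑ c1 : S1 → X1, ∑ c2 : S2 → X2,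
        OScbW qT qX1 qX2 k1 k2 tb c1 c2 *
        (ind (tb (k1 s1) = t) * (ind (c1 s1 = x1) * (ind (c2 s2 = x2) *
          (ind (¬ s1' = s1) * (qS.p (s1', s2) * (Wch (c1 s1') (c2 s2)).p y))))) := by
    have hinner : ∀ (tb : K → T) (c1 : S1 → X1) (c2 : S2 → X2),
        OScbW qT qX1 qX2 k1 k2 tb c1 c2 *
        (ind (tb (k1 s1) = t) * (ind (c1 s1 = x1) * (ind (c2 s2 = x2) *
          OSLam1 qS Wch s1 s2 y c1 c2)))
        = ∑ s1', OScbW qT qX1 qX2 k1 k2 tb c1 c2 *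
          (ind (tb (k1 s1) = t) * (ind (c1 s1 = x1) * (ind (c2 s2 = x2) *
            (ind (¬ s1' = s1) * (qS.p (s1', s2) * (Wch (c1 s1') (c2 s2)).p y))))) :=
      fun tb c1 c2 => by simp only [OSLam1, Finset.mul_sum]
    rw [Finset.sum_congr rfl fun tb _ => Finset.sum_congr rfl fun c1 _ =>
      Finset.sum_congr rfl fun c2 _ => hinner tb c1 c2]
    exact sum_swap3 _
  rw [expand]
  have hRnn : ∀ s1' : S1, 0 ≤ qT.p t * ((qX1 s1 t).p x1 * ((qX2 s2 t).p x2 *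
      (qS.p (s1', s2) * ∑ x1', (qX1 s1' t).p x1' * (Wch x1' x2).p y))) := by
    intro s1'
    exact mul_nonneg (qT.nonneg t) (mul_nonneg ((qX1 s1 t).nonneg x1)
      (mul_nonneg ((qX2 s2 t).nonneg x2) (mul_nonneg (qS.nonneg _)
        (Finset.sum_nonneg fun x1' _ =>
          mul_nonneg ((qX1 s1' t).nonneg _) ((Wch x1' x2).nonneg _)))))
  have hper : ∀ s1' ∈ (Finset.univ : Finset S1),
      (∑ tb : K → T, ∑ c1 : S1 → X1, ∑ c2 : S2 → X2,
        OScbW qT qX1 qX2 k1 k2 tb c1 c2 *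
        (ind (tb (k1 s1) = t) * (ind (c1 s1 = x1) * (ind (c2 s2 = x2) *
          (ind (¬ s1' = s1) * (qS.p (s1', s2) * (Wch (c1 s1') (c2 s2)).p y))))))
      ≤ qT.p t * ((qX1 s1 t).p x1 * ((qX2 s2 t).p x2 *
        (qS.p (s1', s2) * ∑ x1', (qX1 s1' t).p x1' * (Wch x1' x2).p y))) := by
    intro s1' _
    by_cases hs : s1' = s1
    · have hz : ∑ tb : K → T, ∑ c1 : S1 → X1, ∑ c2 : S2 → X2,
          OScbW qT qX1 qX2 k1 k2 tb c1 c2 *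
          (ind (tb (k1 s1) = t) * (ind (c1 s1 = x1) * (ind (c2 s2 = x2) *
            (ind (¬ s1' = s1) * (qS.p (s1', s2) * (Wch (c1 s1') (c2 s2)).p y))))) = 0 := by
        refine Finset.sum_eq_zero fun tb _ => Finset.sum_eq_zero fun c1 _ =>
          Finset.sum_eq_zero fun c2 _ => ?_
        rw [ind_of_false (not_not_intro hs)]
        ring
      rw [hz]; exact hRnn s1'
    · by_cases hq' : 0 < qS.p (s1', s2)
      · have hk1' : k1 s1' = k1 s1 := (hk s1' s2 hq').trans hkk
        have hbody : ∀ (tb : K → T) (c1 : S1 → X1) (c2 : S2 → X2),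
            OScbW qT qX1 qX2 k1 k2 tb c1 c2 *
            (ind (tb (k1 s1) = t) * (ind (c1 s1 = x1) * (ind (c2 s2 = x2) *
              (ind (¬ s1' = s1) * (qS.p (s1', s2) * (Wch (c1 s1') (c2 s2)).p y)))))
            = OScbW qT qX1 qX2 k1 k2 tb c1 c2 *
            (ind (tb (k1 s1) = t) * (ind (c1 s1 = x1) * (ind (c2 s2 = x2) *
              (qS.p (s1', s2) * (Wch (c1 s1') x2).p y)))) := by
          intro tb c1 c2
          rw [ind_of_true hs, one_mul]
          by_cases hc : c2 s2 = x2
          · rw [hc]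
          · rw [ind_of_false hc]; ring
        rw [Finset.sum_congr rfl fun tb _ => Finset.sum_congr rfl fun c1 _ =>
          Finset.sum_congr rfl fun c2 _ => hbody tb c1 c2]
        rw [OSM1 qT qX1 qX2 k1 k2 s1 s2 t x1 x2 s1'
          (fun v => qS.p (s1', s2) * (Wch v x2).p y) hs hk1' hkk]
        refine le_of_eq ?_
        congr 1
        congr 1
        congr 1
        rw [Finset.mul_sum]
        exact Finset.sum_congr rfl fun x1' _ => by ring
      · have hq0 : qS.p (s1', s2) = 0 := le_antisymm (not_lt.mp hq') (qS.nonneg _)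
        have hz : ∑ tb : K → T, ∑ c1 : S1 → X1, ∑ c2 : S2 → X2,
            OScbW qT qX1 qX2 k1 k2 tb c1 c2 *
            (ind (tb (k1 s1) = t) * (ind (c1 s1 = x1) * (ind (c2 s2 = x2) *
              (ind (¬ s1' = s1) * (qS.p (s1', s2) * (Wch (c1 s1') (c2 s2)).p y))))) = 0 := by
          refine Finset.sum_eq_zero fun tb _ => Finset.sum_eq_zero fun c1 _ =>
            Finset.sum_eq_zero fun c2 _ => ?_
          rw [hq0]; ring
        rw [hz]; exact hRnn s1'
  refine le_trans (Finset.sum_le_sum hper) (le_of_eq ?_)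
  rw [show qT.p t * ((qX1 s1 t).p x1 * (qX2 s2 t).p x2) * OSN1 qS qX1 Wch s2 t x2 y
    = (qT.p t * ((qX1 s1 t).p x1 * (qX2 s2 t).p x2)) *
      ∑ s1', qS.p (s1', s2) * ∑ x1', (qX1 s1' t).p x1' * (Wch x1' x2).p y from rfl]
  rw [Finset.mul_sum]
  exact Finset.sum_congr rfl fun s1' _ => by ring

lemma OSLE2 (s1 : S1) (s2 : S2) (t : T) (x1 : X1) (x2 : X2) (y : Y)
    (hq : 0 < qS.p (s1, s2)) (hk : ∀ a b, 0 < qS.p (a, b) → k1 a = k2 b) :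
    ∑ tb : K → T, ∑ c1 : S1 → X1, ∑ c2 : S2 → X2, OScbW qT qX1 qX2 k1 k2 tb c1 c2 *
      (ind (tb (k1 s1) = t) * (ind (c1 s1 = x1) * (ind (c2 s2 = x2) *
        OSLam2 qS Wch s1 s2 y c1 c2)))
    ≤ qT.p t * ((qX1 s1 t).p x1 * (qX2 s2 t).p x2) * OSN2 qS qX2 Wch s1 t x1 y := by
  have hkk : k2 s2 = k1 s1 := (hk s1 s2 hq).symm
  have expand : ∑ tb : K → T, ∑ c1 : S1 → X1, ∑ c2 : S2 → X2,
      OScbW qT qX1 qX2 k1 k2 tb c1 c2 *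
      (ind (tb (k1 s1) = t) * (ind (c1 s1 = x1) * (ind (c2 s2 = x2) *
        OSLam2 qS Wch s1 s2 y c1 c2)))
      = ∑ s2', ∑ tb : K → T, ∑ c1 : S1 → X1, ∑ c2 : S2 → X2,
        OScbW qT qX1 qX2 k1 k2 tb c1 c2 *
        (ind (tb (k1 s1) = t) * (ind (c1 s1 = x1) * (ind (c2 s2 = x2) *
          (ind (¬ s2' = s2) * (qS.p (s1, s2') * (Wch (c1 s1) (c2 s2')).p y))))) := by
    have hinner : ∀ (tb : K → T) (c1 : S1 → X1) (c2 : S2 → X2),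
        OScbW qT qX1 qX2 k1 k2 tb c1 c2 *
        (ind (tb (k1 s1) = t) * (ind (c1 s1 = x1) * (ind (c2 s2 = x2) *
          OSLam2 qS Wch s1 s2 y c1 c2)))
        = ∑ s2', OScbW qT qX1 qX2 k1 k2 tb c1 c2 *
          (ind (tb (k1 s1) = t) * (ind (c1 s1 = x1) * (ind (c2 s2 = x2) *
            (ind (¬ s2' = s2) * (qS.p (s1, s2') * (Wch (c1 s1) (c2 s2')).p y))))) :=
      fun tb c1 c2 => by simp only [OSLam2, Finset.mul_sum]
    rw [Finset.sum_congr rfl fun tb _ => Finset.sum_congr rfl fun c1 _ =>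
      Finset.sum_congr rfl fun c2 _ => hinner tb c1 c2]
    exact sum_swap3 _
  rw [expand]
  have hRnn : ∀ s2' : S2, 0 ≤ qT.p t * ((qX1 s1 t).p x1 * ((qX2 s2 t).p x2 *
      (qS.p (s1, s2') * ∑ x2', (qX2 s2' t).p x2' * (Wch x1 x2').p y))) := by
    intro s2'
    exact mul_nonneg (qT.nonneg t) (mul_nonneg ((qX1 s1 t).nonneg x1)
      (mul_nonneg ((qX2 s2 t).nonneg x2) (mul_nonneg (qS.nonneg _)
        (Finset.sum_nonneg fun x2' _ =>
          mul_nonneg ((qX2 s2' t).nonneg _) ((Wch x1 x2').nonneg _)))))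
  have hper : ∀ s2' ∈ (Finset.univ : Finset S2),
      (∑ tb : K → T, ∑ c1 : S1 → X1, ∑ c2 : S2 → X2,
        OScbW qT qX1 qX2 k1 k2 tb c1 c2 *
        (ind (tb (k1 s1) = t) * (ind (c1 s1 = x1) * (ind (c2 s2 = x2) *
          (ind (¬ s2' = s2) * (qS.p (s1, s2') * (Wch (c1 s1) (c2 s2')).p y))))))
      ≤ qT.p t * ((qX1 s1 t).p x1 * ((qX2 s2 t).p x2 *
        (qS.p (s1, s2') * ∑ x2', (qX2 s2' t).p x2' * (Wch x1 x2').p y))) := by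
    intro s2' _
    by_cases hs : s2' = s2
    · have hz : ∑ tb : K → T, ∑ c1 : S1 → X1, ∑ c2 : S2 → X2,
          OScbW qT qX1 qX2 k1 k2 tb c1 c2 *
          (ind (tb (k1 s1) = t) * (ind (c1 s1 = x1) * (ind (c2 s2 = x2) *
            (ind (¬ s2' = s2) * (qS.p (s1, s2') * (Wch (c1 s1) (c2 s2')).p y))))) = 0 := by
        refine Finset.sum_eq_zero fun tb _ => Finset.sum_eq_zero fun c1 _ =>
          Finset.sum_eq_zero fun c2 _ => ?_
        rw [ind_of_false (not_not_intro hs)]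
        ring
      rw [hz]; exact hRnn s2'
    · by_cases hq' : 0 < qS.p (s1, s2')
      · have hk2' : k2 s2' = k1 s1 := (hk s1 s2' hq').symm
        have hbody : ∀ (tb : K → T) (c1 : S1 → X1) (c2 : S2 → X2),
            OScbW qT qX1 qX2 k1 k2 tb c1 c2 *
            (ind (tb (k1 s1) = t) * (ind (c1 s1 = x1) * (ind (c2 s2 = x2) *
              (ind (¬ s2' = s2) * (qS.p (s1, s2') * (Wch (c1 s1) (c2 s2')).p y)))))
            = OScbW qT qX1 qX2 k1 k2 tb c1 c2 *
            (ind (tb (k1 s1) = t) * (ind (c1 s1 = x1) * (ind (c2 s2 = x2) *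
              (qS.p (s1, s2') * (Wch x1 (c2 s2')).p y)))) := by
          intro tb c1 c2
          rw [ind_of_true hs, one_mul]
          by_cases hc : c1 s1 = x1
          · rw [hc]
          · rw [ind_of_false hc]; ring
        rw [Finset.sum_congr rfl fun tb _ => Finset.sum_congr rfl fun c1 _ =>
          Finset.sum_congr rfl fun c2 _ => hbody tb c1 c2]
        rw [OSM2 qT qX1 qX2 k1 k2 s1 s2 t x1 x2 s2'
          (fun v => qS.p (s1, s2') * (Wch x1 v).p y) hs hk2' hkk]
        refine le_of_eq ?_
        congr 1
        congr 1
        congr 1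
        rw [Finset.mul_sum]
        exact Finset.sum_congr rfl fun x2' _ => by ring
      · have hq0 : qS.p (s1, s2') = 0 := le_antisymm (not_lt.mp hq') (qS.nonneg _)
        have hz : ∑ tb : K → T, ∑ c1 : S1 → X1, ∑ c2 : S2 → X2,
            OScbW qT qX1 qX2 k1 k2 tb c1 c2 *
            (ind (tb (k1 s1) = t) * (ind (c1 s1 = x1) * (ind (c2 s2 = x2) *
              (ind (¬ s2' = s2) * (qS.p (s1, s2') * (Wch (c1 s1) (c2 s2')).p y))))) = 0 := by
          refine Finset.sum_eq_zero fun tb _ => Finset.sum_eq_zero fun c1 _ =>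
            Finset.sum_eq_zero fun c2 _ => ?_
          rw [hq0]; ring
        rw [hz]; exact hRnn s2'
  refine le_trans (Finset.sum_le_sum hper) (le_of_eq ?_)
  rw [show qT.p t * ((qX1 s1 t).p x1 * (qX2 s2 t).p x2) * OSN2 qS qX2 Wch s1 t x1 y
    = (qT.p t * ((qX1 s1 t).p x1 * (qX2 s2 t).p x2)) *
      ∑ s2', qS.p (s1, s2') * ∑ x2', (qX2 s2' t).p x2' * (Wch x1 x2').p y from rfl]
  rw [Finset.mul_sum]
  exact Finset.sum_congr rfl fun s2' _ => by ring

lemma OSLE3 (s1 : S1) (s2 : S2) (t : T) (x1 : X1) (x2 : X2) (y : Y)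
    (hq : 0 < qS.p (s1, s2)) (hk : ∀ a b, 0 < qS.p (a, b) → k1 a = k2 b) :
    ∑ tb : K → T, ∑ c1 : S1 → X1, ∑ c2 : S2 → X2, OScbW qT qX1 qX2 k1 k2 tb c1 c2 *
      (ind (tb (k1 s1) = t) * (ind (c1 s1 = x1) * (ind (c2 s2 = x2) *
        OSLam3 qS Wch k1 s1 s2 y c1 c2)))
    ≤ qT.p t * ((qX1 s1 t).p x1 * (qX2 s2 t).p x2) * OSN3 qS qX1 qX2 Wch k1 (k1 s1) t y := by
  have hkk : k2 s2 = k1 s1 := (hk s1 s2 hq).symm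
  have expand : ∑ tb : K → T, ∑ c1 : S1 → X1, ∑ c2 : S2 → X2,
      OScbW qT qX1 qX2 k1 k2 tb c1 c2 *
      (ind (tb (k1 s1) = t) * (ind (c1 s1 = x1) * (ind (c2 s2 = x2) *
        OSLam3 qS Wch k1 s1 s2 y c1 c2)))
      = ∑ s1', ∑ s2', ∑ tb : K → T, ∑ c1 : S1 → X1, ∑ c2 : S2 → X2,
        OScbW qT qX1 qX2 k1 k2 tb c1 c2 *
        (ind (tb (k1 s1) = t) * (ind (c1 s1 = x1) * (ind (c2 s2 = x2) *
          ((ind (¬ s1' = s1) * (ind (¬ s2' = s2) * ind (k1 s1' = k1 s1))) *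
            (qS.p (s1', s2') * (Wch (c1 s1') (c2 s2')).p y))))) := by
    have hinner : ∀ (tb : K → T) (c1 : S1 → X1) (c2 : S2 → X2),
        OScbW qT qX1 qX2 k1 k2 tb c1 c2 *
        (ind (tb (k1 s1) = t) * (ind (c1 s1 = x1) * (ind (c2 s2 = x2) *
          OSLam3 qS Wch k1 s1 s2 y c1 c2)))
        = ∑ s1', ∑ s2', OScbW qT qX1 qX2 k1 k2 tb c1 c2 *
          (ind (tb (k1 s1) = t) * (ind (c1 s1 = x1) * (ind (c2 s2 = x2) *
            ((ind (¬ s1' = s1) * (ind (¬ s2' = s2) * ind (k1 s1' = k1 s1))) *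
              (qS.p (s1', s2') * (Wch (c1 s1') (c2 s2')).p y))))) :=
      fun tb c1 c2 => by simp only [OSLam3, Finset.mul_sum]
    rw [Finset.sum_congr rfl fun tb _ => Finset.sum_congr rfl fun c1 _ =>
      Finset.sum_congr rfl fun c2 _ => hinner tb c1 c2]
    exact sum_swap32 _
  rw [expand]
  have hRnn : ∀ (s1' : S1) (s2' : S2), 0 ≤ qT.p t * ((qX1 s1 t).p x1 * ((qX2 s2 t).p x2 *
      (ind (k1 s1' = k1 s1) * (qS.p (s1', s2') *
        ∑ x1', ∑ x2', (qX1 s1' t).p x1' * ((qX2 s2' t).p x2' * (Wch x1' x2').p y))))) := by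
    intro s1' s2'
    exact mul_nonneg (qT.nonneg t) (mul_nonneg ((qX1 s1 t).nonneg x1)
      (mul_nonneg ((qX2 s2 t).nonneg x2) (mul_nonneg (ind_nonneg' _)
        (mul_nonneg (qS.nonneg _) (Finset.sum_nonneg fun x1' _ =>
          Finset.sum_nonneg fun x2' _ => mul_nonneg ((qX1 s1' t).nonneg _)
            (mul_nonneg ((qX2 s2' t).nonneg _) ((Wch x1' x2').nonneg _)))))))
  have hper : ∀ s1' ∈ (Finset.univ : Finset S1), ∀ s2' ∈ (Finset.univ : Finset S2),
      (∑ tb : K → T, ∑ c1 : S1 → X1, ∑ c2 : S2 → X2,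
        OScbW qT qX1 qX2 k1 k2 tb c1 c2 *
        (ind (tb (k1 s1) = t) * (ind (c1 s1 = x1) * (ind (c2 s2 = x2) *
          ((ind (¬ s1' = s1) * (ind (¬ s2' = s2) * ind (k1 s1' = k1 s1))) *
            (qS.p (s1', s2') * (Wch (c1 s1') (c2 s2')).p y))))))
      ≤ qT.p t * ((qX1 s1 t).p x1 * ((qX2 s2 t).p x2 *
        (ind (k1 s1' = k1 s1) * (qS.p (s1', s2') *
          ∑ x1', ∑ x2', (qX1 s1' t).p x1' *
            ((qX2 s2' t).p x2' * (Wch x1' x2').p y))))) := by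
    intro s1' _ s2' _
    by_cases hs1 : s1' = s1
    · have hz : (∑ tb : K → T, ∑ c1 : S1 → X1, ∑ c2 : S2 → X2,
          OScbW qT qX1 qX2 k1 k2 tb c1 c2 *
          (ind (tb (k1 s1) = t) * (ind (c1 s1 = x1) * (ind (c2 s2 = x2) *
            ((ind (¬ s1' = s1) * (ind (¬ s2' = s2) * ind (k1 s1' = k1 s1))) *
              (qS.p (s1', s2') * (Wch (c1 s1') (c2 s2')).p y)))))) = 0 :=
        Finset.sum_eq_zero fun tb _ => Finset.sum_eq_zero fun c1 _ =>
          Finset.sum_eq_zero fun c2 _ => by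
            rw [ind_of_false (not_not_intro hs1)]; ring
      rw [hz]; exact hRnn s1' s2'
    · by_cases hs2 : s2' = s2
      · have hz : (∑ tb : K → T, ∑ c1 : S1 → X1, ∑ c2 : S2 → X2,
            OScbW qT qX1 qX2 k1 k2 tb c1 c2 *
            (ind (tb (k1 s1) = t) * (ind (c1 s1 = x1) * (ind (c2 s2 = x2) *
              ((ind (¬ s1' = s1) * (ind (¬ s2' = s2) * ind (k1 s1' = k1 s1))) *
                (qS.p (s1', s2') * (Wch (c1 s1') (c2 s2')).p y)))))) = 0 :=
          Finset.sum_eq_zero fun tb _ => Finset.sum_eq_zero fun c1 _ =>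
            Finset.sum_eq_zero fun c2 _ => by
              rw [ind_of_false (not_not_intro hs2)]; ring
        rw [hz]; exact hRnn s1' s2'
      · by_cases hk3 : k1 s1' = k1 s1
        · by_cases hq' : 0 < qS.p (s1', s2')
          · have hk2' : k2 s2' = k1 s1 := ((hk s1' s2' hq').symm).trans hk3
            have hbody : ∀ (tb : K → T) (c1 : S1 → X1) (c2 : S2 → X2),
                OScbW qT qX1 qX2 k1 k2 tb c1 c2 *
                (ind (tb (k1 s1) = t) * (ind (c1 s1 = x1) * (ind (c2 s2 = x2) *
                  ((ind (¬ s1' = s1) * (ind (¬ s2' = s2) * ind (k1 s1' = k1 s1))) *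
                    (qS.p (s1', s2') * (Wch (c1 s1') (c2 s2')).p y)))))
                = OScbW qT qX1 qX2 k1 k2 tb c1 c2 *
                (ind (tb (k1 s1) = t) * (ind (c1 s1 = x1) * (ind (c2 s2 = x2) *
                  (qS.p (s1', s2') * (Wch (c1 s1') (c2 s2')).p y)))) := by
              intro tb c1 c2
              rw [ind_of_true hs1, ind_of_true hs2, ind_of_true hk3]
              ring
            rw [Finset.sum_congr rfl fun tb _ => Finset.sum_congr rfl fun c1 _ =>
              Finset.sum_congr rfl fun c2 _ => hbody tb c1 c2]
            rw [OSM3 qT qX1 qX2 k1 k2 s1 s2 t x1 x2 s1' s2'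
              (fun v1 v2 => qS.p (s1', s2') * (Wch v1 v2).p y) hs1 hs2 hk3 hk2' hkk]
            refine le_of_eq ?_
            rw [ind_of_true hk3, one_mul]
            congr 1
            congr 1
            congr 1
            have perx : ∀ x1', (qX1 s1' t).p x1' *
                ∑ x2', (qX2 s2' t).p x2' * (qS.p (s1', s2') * (Wch x1' x2').p y)
                = qS.p (s1', s2') * ∑ x2', (qX1 s1' t).p x1' *
                    ((qX2 s2' t).p x2' * (Wch x1' x2').p y) := by
              intro x1'
              rw [Finset.mul_sum, Finset.mul_sum]
              exact Finset.sum_congr rfl fun x2' _ => by ring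
            rw [Finset.sum_congr rfl fun x1' _ => perx x1']
            rw [← Finset.mul_sum]
          · have hq0 : qS.p (s1', s2') = 0 := le_antisymm (not_lt.mp hq') (qS.nonneg _)
            have hz : (∑ tb : K → T, ∑ c1 : S1 → X1, ∑ c2 : S2 → X2,
                OScbW qT qX1 qX2 k1 k2 tb c1 c2 *
                (ind (tb (k1 s1) = t) * (ind (c1 s1 = x1) * (ind (c2 s2 = x2) *
                  ((ind (¬ s1' = s1) * (ind (¬ s2' = s2) * ind (k1 s1' = k1 s1))) *
                    (qS.p (s1', s2') * (Wch (c1 s1') (c2 s2')).p y)))))) = 0 :=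
              Finset.sum_eq_zero fun tb _ => Finset.sum_eq_zero fun c1 _ =>
                Finset.sum_eq_zero fun c2 _ => by rw [hq0]; ring
            rw [hz]; exact hRnn s1' s2'
        · have hz : (∑ tb : K → T, ∑ c1 : S1 → X1, ∑ c2 : S2 → X2,
              OScbW qT qX1 qX2 k1 k2 tb c1 c2 *
              (ind (tb (k1 s1) = t) * (ind (c1 s1 = x1) * (ind (c2 s2 = x2) *
                ((ind (¬ s1' = s1) * (ind (¬ s2' = s2) * ind (k1 s1' = k1 s1))) *
                  (qS.p (s1', s2') * (Wch (c1 s1') (c2 s2')).p y)))))) = 0 :=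
            Finset.sum_eq_zero fun tb _ => Finset.sum_eq_zero fun c1 _ =>
              Finset.sum_eq_zero fun c2 _ => by
                rw [ind_of_false hk3]; ring
          rw [hz]; exact hRnn s1' s2'
  refine le_trans (Finset.sum_le_sum fun s1' h1 => Finset.sum_le_sum fun s2' h2 =>
    hper s1' h1 s2' h2) (le_of_eq ?_)
  rw [show qT.p t * ((qX1 s1 t).p x1 * (qX2 s2 t).p x2) *
      OSN3 qS qX1 qX2 Wch k1 (k1 s1) t y
    = (qT.p t * ((qX1 s1 t).p x1 * (qX2 s2 t).p x2)) *
      ∑ s1', ∑ s2', ind (k1 s1' = k1 s1) * (qS.p (s1', s2') *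
        ∑ x1', ∑ x2', (qX1 s1' t).p x1' *
          ((qX2 s2' t).p x2' * (Wch x1' x2').p y)) from rfl]
  rw [Finset.mul_sum]
  refine Finset.sum_congr rfl fun s1' _ => ?_
  rw [Finset.mul_sum]
  exact Finset.sum_congr rfl fun s2' _ => by ring

lemma OSLE4 (s1 : S1) (s2 : S2) (t : T) (x1 : X1) (x2 : X2) (y : Y)
    (hq : 0 < qS.p (s1, s2)) (hk : ∀ a b, 0 < qS.p (a, b) → k1 a = k2 b) :
    ∑ tb : K → T, ∑ c1 : S1 → X1, ∑ c2 : S2 → X2, OScbW qT qX1 qX2 k1 k2 tb c1 c2 *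
      (ind (tb (k1 s1) = t) * (ind (c1 s1 = x1) * (ind (c2 s2 = x2) *
        OSLam4 qS Wch k1 s1 s2 y c1 c2)))
    ≤ qT.p t * ((qX1 s1 t).p x1 * (qX2 s2 t).p x2) * mY qS qT qX1 qX2 Wch y := by
  have hkk : k2 s2 = k1 s1 := (hk s1 s2 hq).symm
  have expand : ∑ tb : K → T, ∑ c1 : S1 → X1, ∑ c2 : S2 → X2,
      OScbW qT qX1 qX2 k1 k2 tb c1 c2 *
      (ind (tb (k1 s1) = t) * (ind (c1 s1 = x1) * (ind (c2 s2 = x2) *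
        OSLam4 qS Wch k1 s1 s2 y c1 c2)))
      = ∑ s1', ∑ s2', ∑ tb : K → T, ∑ c1 : S1 → X1, ∑ c2 : S2 → X2,
        OScbW qT qX1 qX2 k1 k2 tb c1 c2 *
        (ind (tb (k1 s1) = t) * (ind (c1 s1 = x1) * (ind (c2 s2 = x2) *
          ((ind (¬ s1' = s1) * (ind (¬ s2' = s2) * ind (¬ k1 s1' = k1 s1))) *
            (qS.p (s1', s2') * (Wch (c1 s1') (c2 s2')).p y))))) := by
    have hinner : ∀ (tb : K → T) (c1 : S1 → X1) (c2 : S2 → X2),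
        OScbW qT qX1 qX2 k1 k2 tb c1 c2 *
        (ind (tb (k1 s1) = t) * (ind (c1 s1 = x1) * (ind (c2 s2 = x2) *
          OSLam4 qS Wch k1 s1 s2 y c1 c2)))
        = ∑ s1', ∑ s2', OScbW qT qX1 qX2 k1 k2 tb c1 c2 *
          (ind (tb (k1 s1) = t) * (ind (c1 s1 = x1) * (ind (c2 s2 = x2) *
            ((ind (¬ s1' = s1) * (ind (¬ s2' = s2) * ind (¬ k1 s1' = k1 s1))) *
              (qS.p (s1', s2') * (Wch (c1 s1') (c2 s2')).p y))))) :=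
      fun tb c1 c2 => by simp only [OSLam4, Finset.mul_sum]
    rw [Finset.sum_congr rfl fun tb _ => Finset.sum_congr rfl fun c1 _ =>
      Finset.sum_congr rfl fun c2 _ => hinner tb c1 c2]
    exact sum_swap32 _
  rw [expand]
  have hRnn : ∀ (s1' : S1) (s2' : S2), 0 ≤ qT.p t * ((qX1 s1 t).p x1 * ((qX2 s2 t).p x2 *
      (qS.p (s1', s2') * ∑ t', qT.p t' * ∑ x1', (qX1 s1' t').p x1' *
        ∑ x2', (qX2 s2' t').p x2' * (Wch x1' x2').p y))) := by
    intro s1' s2'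
    exact mul_nonneg (qT.nonneg t) (mul_nonneg ((qX1 s1 t).nonneg x1)
      (mul_nonneg ((qX2 s2 t).nonneg x2) (mul_nonneg (qS.nonneg _)
        (Finset.sum_nonneg fun t' _ => mul_nonneg (qT.nonneg t')
          (Finset.sum_nonneg fun x1' _ => mul_nonneg ((qX1 s1' t').nonneg _)
            (Finset.sum_nonneg fun x2' _ => mul_nonneg ((qX2 s2' t').nonneg _)
              ((Wch x1' x2').nonneg _)))))))
  have hper : ∀ s1' ∈ (Finset.univ : Finset S1), ∀ s2' ∈ (Finset.univ : Finset S2),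
      (∑ tb : K → T, ∑ c1 : S1 → X1, ∑ c2 : S2 → X2,
        OScbW qT qX1 qX2 k1 k2 tb c1 c2 *
        (ind (tb (k1 s1) = t) * (ind (c1 s1 = x1) * (ind (c2 s2 = x2) *
          ((ind (¬ s1' = s1) * (ind (¬ s2' = s2) * ind (¬ k1 s1' = k1 s1))) *
            (qS.p (s1', s2') * (Wch (c1 s1') (c2 s2')).p y))))))
      ≤ qT.p t * ((qX1 s1 t).p x1 * ((qX2 s2 t).p x2 *
        (qS.p (s1', s2') * ∑ t', qT.p t' * ∑ x1', (qX1 s1' t').p x1' *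
          ∑ x2', (qX2 s2' t').p x2' * (Wch x1' x2').p y))) := by
    intro s1' _ s2' _
    by_cases hs1 : s1' = s1
    · have hz : (∑ tb : K → T, ∑ c1 : S1 → X1, ∑ c2 : S2 → X2,
          OScbW qT qX1 qX2 k1 k2 tb c1 c2 *
          (ind (tb (k1 s1) = t) * (ind (c1 s1 = x1) * (ind (c2 s2 = x2) *
            ((ind (¬ s1' = s1) * (ind (¬ s2' = s2) * ind (¬ k1 s1' = k1 s1))) *
              (qS.p (s1', s2') * (Wch (c1 s1') (c2 s2')).p y)))))) = 0 :=
        Finset.sum_eq_zero fun tb _ => Finset.sum_eq_zero fun c1 _ =>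
          Finset.sum_eq_zero fun c2 _ => by
            rw [ind_of_false (not_not_intro hs1)]; ring
      rw [hz]; exact hRnn s1' s2'
    · by_cases hs2 : s2' = s2
      · have hz : (∑ tb : K → T, ∑ c1 : S1 → X1, ∑ c2 : S2 → X2,
            OScbW qT qX1 qX2 k1 k2 tb c1 c2 *
            (ind (tb (k1 s1) = t) * (ind (c1 s1 = x1) * (ind (c2 s2 = x2) *
              ((ind (¬ s1' = s1) * (ind (¬ s2' = s2) * ind (¬ k1 s1' = k1 s1))) *
                (qS.p (s1', s2') * (Wch (c1 s1') (c2 s2')).p y)))))) = 0 :=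
          Finset.sum_eq_zero fun tb _ => Finset.sum_eq_zero fun c1 _ =>
            Finset.sum_eq_zero fun c2 _ => by
              rw [ind_of_false (not_not_intro hs2)]; ring
        rw [hz]; exact hRnn s1' s2'
      · by_cases hk3 : k1 s1' = k1 s1
        · have hz : (∑ tb : K → T, ∑ c1 : S1 → X1, ∑ c2 : S2 → X2,
              OScbW qT qX1 qX2 k1 k2 tb c1 c2 *
              (ind (tb (k1 s1) = t) * (ind (c1 s1 = x1) * (ind (c2 s2 = x2) *
                ((ind (¬ s1' = s1) * (ind (¬ s2' = s2) * ind (¬ k1 s1' = k1 s1))) *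
                  (qS.p (s1', s2') * (Wch (c1 s1') (c2 s2')).p y)))))) = 0 :=
            Finset.sum_eq_zero fun tb _ => Finset.sum_eq_zero fun c1 _ =>
              Finset.sum_eq_zero fun c2 _ => by
                rw [ind_of_false (not_not_intro hk3)]; ring
          rw [hz]; exact hRnn s1' s2'
        · by_cases hq' : 0 < qS.p (s1', s2')
          · have hk2' : k2 s2' = k1 s1' := (hk s1' s2' hq').symm
            have hbody : ∀ (tb : K → T) (c1 : S1 → X1) (c2 : S2 → X2),
                OScbW qT qX1 qX2 k1 k2 tb c1 c2 *
                (ind (tb (k1 s1) = t) * (ind (c1 s1 = x1) * (ind (c2 s2 = x2) *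
                  ((ind (¬ s1' = s1) * (ind (¬ s2' = s2) * ind (¬ k1 s1' = k1 s1))) *
                    (qS.p (s1', s2') * (Wch (c1 s1') (c2 s2')).p y)))))
                = OScbW qT qX1 qX2 k1 k2 tb c1 c2 *
                (ind (tb (k1 s1) = t) * (ind (c1 s1 = x1) * (ind (c2 s2 = x2) *
                  (qS.p (s1', s2') * (Wch (c1 s1') (c2 s2')).p y)))) := by
              intro tb c1 c2
              rw [ind_of_true hs1, ind_of_true hs2, ind_of_true hk3]
              ring
            rw [Finset.sum_congr rfl fun tb _ => Finset.sum_congr rfl fun c1 _ =>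
              Finset.sum_congr rfl fun c2 _ => hbody tb c1 c2]
            rw [OSM4 qT qX1 qX2 k1 k2 s1 s2 t x1 x2 s1' s2'
              (fun v1 v2 => qS.p (s1', s2') * (Wch v1 v2).p y) hs1 hs2 hk3 hk2' hkk]
            refine le_of_eq ?_
            congr 1
            congr 1
            congr 1
            have p2 : ∀ (t' : T) (x1' : X1), ∑ x2', (qX2 s2' t').p x2' *
                (qS.p (s1', s2') * (Wch x1' x2').p y)
                = qS.p (s1', s2') * ∑ x2', (qX2 s2' t').p x2' * (Wch x1' x2').p y :=
              fun t' x1' => sum_pull_const _ _ _ (fun x2' => by ring)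
            have p1 : ∀ t' : T, ∑ x1', (qX1 s1' t').p x1' *
                ∑ x2', (qX2 s2' t').p x2' * (qS.p (s1', s2') * (Wch x1' x2').p y)
                = qS.p (s1', s2') * ∑ x1', (qX1 s1' t').p x1' *
                    ∑ x2', (qX2 s2' t').p x2' * (Wch x1' x2').p y := by
              intro t'
              rw [Finset.sum_congr rfl fun x1' _ => by rw [p2 t' x1']]
              exact sum_pull_const _ _ _ (fun x1' => by ring)
            rw [Finset.sum_congr rfl fun t' _ => by rw [p1 t']]
            exact sum_pull_const _ _ _ (fun t' => by ring)
          · have hq0 : qS.p (s1', s2') = 0 := le_antisymm (not_lt.mp hq') (qS.nonneg _)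
            have hz : (∑ tb : K → T, ∑ c1 : S1 → X1, ∑ c2 : S2 → X2,
                OScbW qT qX1 qX2 k1 k2 tb c1 c2 *
                (ind (tb (k1 s1) = t) * (ind (c1 s1 = x1) * (ind (c2 s2 = x2) *
                  ((ind (¬ s1' = s1) * (ind (¬ s2' = s2) * ind (¬ k1 s1' = k1 s1))) *
                    (qS.p (s1', s2') * (Wch (c1 s1') (c2 s2')).p y)))))) = 0 :=
              Finset.sum_eq_zero fun tb _ => Finset.sum_eq_zero fun c1 _ =>
                Finset.sum_eq_zero fun c2 _ => by rw [hq0]; ring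
            rw [hz]; exact hRnn s1' s2'
  refine le_trans (Finset.sum_le_sum fun s1' h1 => Finset.sum_le_sum fun s2' h2 =>
    hper s1' h1 s2' h2) (le_of_eq ?_)
  rw [mY_expand qS qT qX1 qX2 Wch y]
  rw [Finset.mul_sum]
  refine Finset.sum_congr rfl fun s1' _ => ?_
  rw [Finset.mul_sum]
  exact Finset.sum_congr rfl fun s2' _ => by ring

/-- Per-point split function for the error analysis. -/
noncomputable def OSH (γ : ℝ) (s1 : S1) (s2 : S2) (y : Y) (t : T) (x1 : X1) (x2 : X2)
    (c1 : S1 → X1) (c2 : S2 → X2) : ℝ :=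
  ind (OSBad qS qT qX1 qX2 Wch k1 γ s1 s2 t x1 x2 y) * (qS.p (s1, s2) * (Wch x1 x2).p y)
  + (ind (¬ OSBad qS qT qX1 qX2 Wch k1 γ s1 s2 t x1 x2 y) *
      min (qS.p (s1, s2) * (Wch x1 x2).p y) (OSLam1 qS Wch s1 s2 y c1 c2)
  + (ind (¬ OSBad qS qT qX1 qX2 Wch k1 γ s1 s2 t x1 x2 y) *
      min (qS.p (s1, s2) * (Wch x1 x2).p y) (OSLam2 qS Wch s1 s2 y c1 c2)
  + (ind (¬ OSBad qS qT qX1 qX2 Wch k1 γ s1 s2 t x1 x2 y) *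
      min (qS.p (s1, s2) * (Wch x1 x2).p y) (OSLam3 qS Wch k1 s1 s2 y c1 c2)
  + ind (¬ OSBad qS qT qX1 qX2 Wch k1 γ s1 s2 t x1 x2 y) *
      min (qS.p (s1, s2) * (Wch x1 x2).p y) (OSLam4 qS Wch k1 s1 s2 y c1 c2))))

lemma OSkey (γ : ℝ) (s1 : S1) (s2 : S2) (y : Y) (t : T) (x1 : X1) (x2 : X2)
    (hq : 0 < qS.p (s1, s2)) (hk : ∀ a b, 0 < qS.p (a, b) → k1 a = k2 b) :
    ∑ tb : K → T, ∑ c1 : S1 → X1, ∑ c2 : S2 → X2, OScbW qT qX1 qX2 k1 k2 tb c1 c2 *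
      (ind (tb (k1 s1) = t) * (ind (c1 s1 = x1) * (ind (c2 s2 = x2) *
        OSH qS qT qX1 qX2 Wch k1 γ s1 s2 y t x1 x2 c1 c2)))
    ≤ qMAC qS qT qX1 qX2 Wch s1 s2 t x1 x2 y *
        ind (OSBad qS qT qX1 qX2 Wch k1 γ s1 s2 t x1 x2 y)
      + 4 * ((2:ℝ)^(-γ) * qMAC qS qT qX1 qX2 Wch s1 s2 t x1 x2 y) := by
  have hkk : k2 s2 = k1 s1 := (hk s1 s2 hq).symm
  have hμnn : 0 ≤ qT.p t * ((qX1 s1 t).p x1 * (qX2 s2 t).p x2) :=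
    mul_nonneg (qT.nonneg t) (mul_nonneg ((qX1 s1 t).nonneg x1) ((qX2 s2 t).nonneg x2))
  have hAnn : 0 ≤ qS.p (s1, s2) * (Wch x1 x2).p y :=
    mul_nonneg (qS.nonneg _) ((Wch x1 x2).nonneg y)
  have h2γ : (0:ℝ) ≤ (2:ℝ)^(-γ) := le_of_lt (Real.rpow_pos_of_pos (by norm_num) _)
  have hwnn : ∀ (tb : K → T) (c1 : S1 → X1) (c2 : S2 → X2),
      0 ≤ OScbW qT qX1 qX2 k1 k2 tb c1 c2 *
        (ind (tb (k1 s1) = t) * (ind (c1 s1 = x1) * ind (c2 s2 = x2))) :=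
    fun tb c1 c2 => mul_nonneg (OScbW_nonneg qT qX1 qX2 k1 k2 tb c1 c2)
      (mul_nonneg (ind_nonneg' _) (mul_nonneg (ind_nonneg' _) (ind_nonneg' _)))
  have hμA : qT.p t * ((qX1 s1 t).p x1 * (qX2 s2 t).p x2) *
      (qS.p (s1, s2) * (Wch x1 x2).p y) = qMAC qS qT qX1 qX2 Wch s1 s2 t x1 x2 y := by
    unfold qMAC; ring
  -- the four "good event" bounds
  have good : ∀ N : ℝ,
      (0 < qMAC qS qT qX1 qX2 Wch s1 s2 t x1 x2 y →
        ¬ OSBad qS qT qX1 qX2 Wch k1 γ s1 s2 t x1 x2 y →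
        N ≤ (2:ℝ)^(-γ) * (qS.p (s1, s2) * (Wch x1 x2).p y)) →
      ind (¬ OSBad qS qT qX1 qX2 Wch k1 γ s1 s2 t x1 x2 y) *
        min (qT.p t * ((qX1 s1 t).p x1 * (qX2 s2 t).p x2) * (qS.p (s1, s2) * (Wch x1 x2).p y))
            (qT.p t * ((qX1 s1 t).p x1 * (qX2 s2 t).p x2) * N)
      ≤ (2:ℝ)^(-γ) * qMAC qS qT qX1 qX2 Wch s1 s2 t x1 x2 y := by
    intro N hcnd
    by_cases hpos : 0 < qMAC qS qT qX1 qX2 Wch s1 s2 t x1 x2 y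
    · by_cases hbad : OSBad qS qT qX1 qX2 Wch k1 γ s1 s2 t x1 x2 y
      · rw [ind_of_false (not_not_intro hbad), zero_mul]
        exact mul_nonneg h2γ (qMAC_nonneg qS qT qX1 qX2 Wch s1 s2 t x1 x2 y)
      · rw [ind_of_true hbad, one_mul]
        calc min (qT.p t * ((qX1 s1 t).p x1 * (qX2 s2 t).p x2) *
                (qS.p (s1, s2) * (Wch x1 x2).p y))
              (qT.p t * ((qX1 s1 t).p x1 * (qX2 s2 t).p x2) * N)
            ≤ qT.p t * ((qX1 s1 t).p x1 * (qX2 s2 t).p x2) * N := min_le_right _ _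
          _ ≤ qT.p t * ((qX1 s1 t).p x1 * (qX2 s2 t).p x2) *
              ((2:ℝ)^(-γ) * (qS.p (s1, s2) * (Wch x1 x2).p y)) :=
            mul_le_mul_of_nonneg_left (hcnd hpos hbad) hμnn
          _ = (2:ℝ)^(-γ) * qMAC qS qT qX1 qX2 Wch s1 s2 t x1 x2 y := by
            unfold qMAC; ring
    · have hq0 : qMAC qS qT qX1 qX2 Wch s1 s2 t x1 x2 y = 0 :=
        le_antisymm (not_lt.mp hpos) (qMAC_nonneg qS qT qX1 qX2 Wch s1 s2 t x1 x2 y)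
      have hA0 : qT.p t * ((qX1 s1 t).p x1 * (qX2 s2 t).p x2) *
          (qS.p (s1, s2) * (Wch x1 x2).p y) = 0 := by rw [hμA, hq0]
      calc ind (¬ OSBad qS qT qX1 qX2 Wch k1 γ s1 s2 t x1 x2 y) *
            min (qT.p t * ((qX1 s1 t).p x1 * (qX2 s2 t).p x2) *
                (qS.p (s1, s2) * (Wch x1 x2).p y))
              (qT.p t * ((qX1 s1 t).p x1 * (qX2 s2 t).p x2) * N)
          ≤ ind (¬ OSBad qS qT qX1 qX2 Wch k1 γ s1 s2 t x1 x2 y) * 0 :=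
            mul_le_mul_of_nonneg_left
              (le_trans (min_le_left _ _) (le_of_eq hA0)) (ind_nonneg' _)
        _ = 0 := mul_zero _
        _ ≤ (2:ℝ)^(-γ) * qMAC qS qT qX1 qX2 Wch s1 s2 t x1 x2 y := by
            rw [hq0, mul_zero]
  -- class-j total bounds
  have classbound : ∀ (Λ : (S1 → X1) → (S2 → X2) → ℝ) (N : ℝ),
      (∑ tb : K → T, ∑ c1 : S1 → X1, ∑ c2 : S2 → X2, OScbW qT qX1 qX2 k1 k2 tb c1 c2 *
        (ind (tb (k1 s1) = t) * (ind (c1 s1 = x1) * (ind (c2 s2 = x2) * Λ c1 c2))) ≤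
        qT.p t * ((qX1 s1 t).p x1 * (qX2 s2 t).p x2) * N) →
      (0 < qMAC qS qT qX1 qX2 Wch s1 s2 t x1 x2 y →
        ¬ OSBad qS qT qX1 qX2 Wch k1 γ s1 s2 t x1 x2 y →
        N ≤ (2:ℝ)^(-γ) * (qS.p (s1, s2) * (Wch x1 x2).p y)) →
      ∑ tb : K → T, ∑ c1 : S1 → X1, ∑ c2 : S2 → X2, OScbW qT qX1 qX2 k1 k2 tb c1 c2 *
        (ind (tb (k1 s1) = t) * (ind (c1 s1 = x1) * (ind (c2 s2 = x2) *
          (ind (¬ OSBad qS qT qX1 qX2 Wch k1 γ s1 s2 t x1 x2 y) *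
            min (qS.p (s1, s2) * (Wch x1 x2).p y) (Λ c1 c2)))))
      ≤ (2:ℝ)^(-γ) * qMAC qS qT qX1 qX2 Wch s1 s2 t x1 x2 y := by
    intro Λ N hLE hcnd
    have hpull : ∑ tb : K → T, ∑ c1 : S1 → X1, ∑ c2 : S2 → X2,
        OScbW qT qX1 qX2 k1 k2 tb c1 c2 *
        (ind (tb (k1 s1) = t) * (ind (c1 s1 = x1) * (ind (c2 s2 = x2) *
          (ind (¬ OSBad qS qT qX1 qX2 Wch k1 γ s1 s2 t x1 x2 y) *
            min (qS.p (s1, s2) * (Wch x1 x2).p y) (Λ c1 c2)))))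
        = ind (¬ OSBad qS qT qX1 qX2 Wch k1 γ s1 s2 t x1 x2 y) *
          ∑ tb : K → T, ∑ c1 : S1 → X1, ∑ c2 : S2 → X2,
            (OScbW qT qX1 qX2 k1 k2 tb c1 c2 *
              (ind (tb (k1 s1) = t) * (ind (c1 s1 = x1) * ind (c2 s2 = x2)))) *
            min (qS.p (s1, s2) * (Wch x1 x2).p y) (Λ c1 c2) :=
      pull3 _ _ _ (fun tb c1 c2 => by ring)
    rw [hpull]
    have hmin : ∑ tb : K → T, ∑ c1 : S1 → X1, ∑ c2 : S2 → X2,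
        (OScbW qT qX1 qX2 k1 k2 tb c1 c2 *
          (ind (tb (k1 s1) = t) * (ind (c1 s1 = x1) * ind (c2 s2 = x2)))) *
        min (qS.p (s1, s2) * (Wch x1 x2).p y) (Λ c1 c2)
        ≤ min (qT.p t * ((qX1 s1 t).p x1 * (qX2 s2 t).p x2) *
              (qS.p (s1, s2) * (Wch x1 x2).p y))
            (qT.p t * ((qX1 s1 t).p x1 * (qX2 s2 t).p x2) * N) := by
      refine sum_min_le3 _ hwnn _ hAnn (fun tb c1 c2 => Λ c1 c2) _ _
        (le_of_eq (OSmass qT qX1 qX2 k1 k2 s1 s2 t x1 x2 hkk)) ?_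
      refine le_trans (le_of_eq (Finset.sum_congr rfl fun tb _ =>
        Finset.sum_congr rfl fun c1 _ => Finset.sum_congr rfl fun c2 _ => by ring)) hLE
    calc ind (¬ OSBad qS qT qX1 qX2 Wch k1 γ s1 s2 t x1 x2 y) *
          ∑ tb : K → T, ∑ c1 : S1 → X1, ∑ c2 : S2 → X2,
            (OScbW qT qX1 qX2 k1 k2 tb c1 c2 *
              (ind (tb (k1 s1) = t) * (ind (c1 s1 = x1) * ind (c2 s2 = x2)))) *
            min (qS.p (s1, s2) * (Wch x1 x2).p y) (Λ c1 c2)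
        ≤ ind (¬ OSBad qS qT qX1 qX2 Wch k1 γ s1 s2 t x1 x2 y) *
            min (qT.p t * ((qX1 s1 t).p x1 * (qX2 s2 t).p x2) *
                (qS.p (s1, s2) * (Wch x1 x2).p y))
              (qT.p t * ((qX1 s1 t).p x1 * (qX2 s2 t).p x2) * N) :=
          mul_le_mul_of_nonneg_left hmin (ind_nonneg' _)
      _ ≤ (2:ℝ)^(-γ) * qMAC qS qT qX1 qX2 Wch s1 s2 t x1 x2 y := good N hcnd
  -- split the sum into five pieces
  have hsplit : ∑ tb : K → T, ∑ c1 : S1 → X1, ∑ c2 : S2 → X2,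
      OScbW qT qX1 qX2 k1 k2 tb c1 c2 *
      (ind (tb (k1 s1) = t) * (ind (c1 s1 = x1) * (ind (c2 s2 = x2) *
        OSH qS qT qX1 qX2 Wch k1 γ s1 s2 y t x1 x2 c1 c2)))
      = (∑ tb : K → T, ∑ c1 : S1 → X1, ∑ c2 : S2 → X2,
          OScbW qT qX1 qX2 k1 k2 tb c1 c2 *
          (ind (tb (k1 s1) = t) * (ind (c1 s1 = x1) * (ind (c2 s2 = x2) *
            (ind (OSBad qS qT qX1 qX2 Wch k1 γ s1 s2 t x1 x2 y) *
              (qS.p (s1, s2) * (Wch x1 x2).p y))))))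
      + ((∑ tb : K → T, ∑ c1 : S1 → X1, ∑ c2 : S2 → X2,
          OScbW qT qX1 qX2 k1 k2 tb c1 c2 *
          (ind (tb (k1 s1) = t) * (ind (c1 s1 = x1) * (ind (c2 s2 = x2) *
            (ind (¬ OSBad qS qT qX1 qX2 Wch k1 γ s1 s2 t x1 x2 y) *
              min (qS.p (s1, s2) * (Wch x1 x2).p y) (OSLam1 qS Wch s1 s2 y c1 c2))))))
      + ((∑ tb : K → T, ∑ c1 : S1 → X1, ∑ c2 : S2 → X2,
          OScbW qT qX1 qX2 k1 k2 tb c1 c2 *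
          (ind (tb (k1 s1) = t) * (ind (c1 s1 = x1) * (ind (c2 s2 = x2) *
            (ind (¬ OSBad qS qT qX1 qX2 Wch k1 γ s1 s2 t x1 x2 y) *
              min (qS.p (s1, s2) * (Wch x1 x2).p y) (OSLam2 qS Wch s1 s2 y c1 c2))))))
      + ((∑ tb : K → T, ∑ c1 : S1 → X1, ∑ c2 : S2 → X2,
          OScbW qT qX1 qX2 k1 k2 tb c1 c2 *
          (ind (tb (k1 s1) = t) * (ind (c1 s1 = x1) * (ind (c2 s2 = x2) *
            (ind (¬ OSBad qS qT qX1 qX2 Wch k1 γ s1 s2 t x1 x2 y) *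
              min (qS.p (s1, s2) * (Wch x1 x2).p y) (OSLam3 qS Wch k1 s1 s2 y c1 c2))))))
      + (∑ tb : K → T, ∑ c1 : S1 → X1, ∑ c2 : S2 → X2,
          OScbW qT qX1 qX2 k1 k2 tb c1 c2 *
          (ind (tb (k1 s1) = t) * (ind (c1 s1 = x1) * (ind (c2 s2 = x2) *
            (ind (¬ OSBad qS qT qX1 qX2 Wch k1 γ s1 s2 t x1 x2 y) *
              min (qS.p (s1, s2) * (Wch x1 x2).p y)
                (OSLam4 qS Wch k1 s1 s2 y c1 c2))))))))) := by
    simp only [OSH, mul_add, Finset.sum_add_distrib]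
  rw [hsplit]
  -- bound the bad piece
  have hbadpiece : (∑ tb : K → T, ∑ c1 : S1 → X1, ∑ c2 : S2 → X2,
      OScbW qT qX1 qX2 k1 k2 tb c1 c2 *
      (ind (tb (k1 s1) = t) * (ind (c1 s1 = x1) * (ind (c2 s2 = x2) *
        (ind (OSBad qS qT qX1 qX2 Wch k1 γ s1 s2 t x1 x2 y) *
          (qS.p (s1, s2) * (Wch x1 x2).p y))))))
      = qMAC qS qT qX1 qX2 Wch s1 s2 t x1 x2 y *
        ind (OSBad qS qT qX1 qX2 Wch k1 γ s1 s2 t x1 x2 y) := by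
    rw [pull3 (ind (OSBad qS qT qX1 qX2 Wch k1 γ s1 s2 t x1 x2 y) *
        (qS.p (s1, s2) * (Wch x1 x2).p y)) _
      (fun tb c1 c2 => OScbW qT qX1 qX2 k1 k2 tb c1 c2 *
        (ind (tb (k1 s1) = t) * (ind (c1 s1 = x1) * ind (c2 s2 = x2))))
      (fun tb c1 c2 => by ring)]
    rw [OSmass qT qX1 qX2 k1 k2 s1 s2 t x1 x2 hkk]
    unfold qMAC; ring
  rw [hbadpiece]
  -- bound the four good pieces
  have hbad1 := classbound (fun c1 c2 => OSLam1 qS Wch s1 s2 y c1 c2)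
    (OSN1 qS qX1 Wch s2 t x2 y) (OSLE1 qS qT qX1 qX2 Wch k1 k2 s1 s2 t x1 x2 y hq hk)
    (fun hpos hnb => by
      simp only [OSBad, not_or, not_lt] at hnb
      exact Tcond1 qS qT qX1 qX2 Wch hpos hnb.1)
  have hbad2 := classbound (fun c1 c2 => OSLam2 qS Wch s1 s2 y c1 c2)
    (OSN2 qS qX2 Wch s1 t x1 y) (OSLE2 qS qT qX1 qX2 Wch k1 k2 s1 s2 t x1 x2 y hq hk)
    (fun hpos hnb => by
      simp only [OSBad, not_or, not_lt] at hnb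
      exact Tcond2 qS qT qX1 qX2 Wch hpos hnb.2.1)
  have hbad3 := classbound (fun c1 c2 => OSLam3 qS Wch k1 s1 s2 y c1 c2)
    (OSN3 qS qX1 qX2 Wch k1 (k1 s1) t y)
    (OSLE3 qS qT qX1 qX2 Wch k1 k2 s1 s2 t x1 x2 y hq hk)
    (fun hpos hnb => by
      simp only [OSBad, not_or, not_lt] at hnb
      exact Tcond3 qS qT qX1 qX2 Wch k1 hpos hnb.2.2.1)
  have hbad4 := classbound (fun c1 c2 => OSLam4 qS Wch k1 s1 s2 y c1 c2)
    (mY qS qT qX1 qX2 Wch y) (OSLE4 qS qT qX1 qX2 Wch k1 k2 s1 s2 t x1 x2 y hq hk)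
    (fun hpos hnb => by
      simp only [OSBad, not_or, not_lt] at hnb
      exact Tcond4 qS qT qX1 qX2 Wch hpos hnb.2.2.2)
  linarith

lemma OSblock (γ : ℝ) (s1 : S1) (s2 : S2) (y : Y)
    (hk : ∀ a b, 0 < qS.p (a, b) → k1 a = k2 b) :
    ∑ tb : K → T, ∑ c1 : S1 → X1, ∑ c2 : S2 → X2, OScbW qT qX1 qX2 k1 k2 tb c1 c2 *
      (OSG qS Wch c1 c2 (s1, s2) y * (1 - (OSdec qS Wch c1 c2 y).p (s1, s2)))
    ≤ ∑ t, ∑ x1, ∑ x2, (qMAC qS qT qX1 qX2 Wch s1 s2 t x1 x2 y *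
        ind (OSBad qS qT qX1 qX2 Wch k1 γ s1 s2 t x1 x2 y)
        + 4 * ((2:ℝ)^(-γ) * qMAC qS qT qX1 qX2 Wch s1 s2 t x1 x2 y)) := by
  have h2γ : (0:ℝ) ≤ (2:ℝ)^(-γ) := le_of_lt (Real.rpow_pos_of_pos (by norm_num) _)
  have hRHSnn : ∀ (t : T) (x1 : X1) (x2 : X2),
      0 ≤ qMAC qS qT qX1 qX2 Wch s1 s2 t x1 x2 y *
        ind (OSBad qS qT qX1 qX2 Wch k1 γ s1 s2 t x1 x2 y)
        + 4 * ((2:ℝ)^(-γ) * qMAC qS qT qX1 qX2 Wch s1 s2 t x1 x2 y) := by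
    intro t x1 x2
    have h1 := qMAC_nonneg qS qT qX1 qX2 Wch s1 s2 t x1 x2 y
    have h2 := ind_nonneg' (OSBad qS qT qX1 qX2 Wch k1 γ s1 s2 t x1 x2 y)
    have h3 := mul_nonneg h1 h2
    have h4 := mul_nonneg h2γ h1
    linarith
  by_cases hq : 0 < qS.p (s1, s2)
  · have percode : ∀ (tb : K → T) (c1 : S1 → X1) (c2 : S2 → X2),
        OSG qS Wch c1 c2 (s1, s2) y * (1 - (OSdec qS Wch c1 c2 y).p (s1, s2))
        ≤ OSH qS qT qX1 qX2 Wch k1 γ s1 s2 y (tb (k1 s1)) (c1 s1) (c2 s2) c1 c2 := by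
      intro tb c1 c2
      have hdb := OSdec_bound qS Wch k1 s1 s2 y c1 c2
      have l1 := OSLam1_nonneg qS Wch s1 s2 y c1 c2
      have l2 := OSLam2_nonneg qS Wch s1 s2 y c1 c2
      have l3 := OSLam3_nonneg qS Wch k1 s1 s2 y c1 c2
      have l4 := OSLam4_nonneg qS Wch k1 s1 s2 y c1 c2
      have hAnn : 0 ≤ qS.p (s1, s2) * (Wch (c1 s1) (c2 s2)).p y :=
        mul_nonneg (qS.nonneg _) ((Wch _ _).nonneg _)
      rw [show OSG qS Wch c1 c2 (s1, s2) y
        = qS.p (s1, s2) * (Wch (c1 s1) (c2 s2)).p y from rfl] at hdb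
      unfold OSH
      by_cases hbad : OSBad qS qT qX1 qX2 Wch k1 γ s1 s2 (tb (k1 s1)) (c1 s1) (c2 s2) y
      · rw [ind_of_true hbad, ind_of_false (not_not_intro hbad)]
        simp only [one_mul, zero_mul, add_zero]
        exact le_trans hdb (min_le_left _ _)
      · rw [ind_of_false hbad, ind_of_true hbad]
        simp only [one_mul, zero_mul, zero_add]
        refine le_trans hdb ?_
        have hm1 := min_add_le' (qS.p (s1, s2) * (Wch (c1 s1) (c2 s2)).p y)
          (OSLam1 qS Wch s1 s2 y c1 c2)
          (OSLam2 qS Wch s1 s2 y c1 c2 + (OSLam3 qS Wch k1 s1 s2 y c1 c2 +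
            OSLam4 qS Wch k1 s1 s2 y c1 c2)) l1 (by linarith) hAnn
        have hm2 := min_add_le' (qS.p (s1, s2) * (Wch (c1 s1) (c2 s2)).p y)
          (OSLam2 qS Wch s1 s2 y c1 c2)
          (OSLam3 qS Wch k1 s1 s2 y c1 c2 + OSLam4 qS Wch k1 s1 s2 y c1 c2)
          l2 (by linarith) hAnn
        have hm3 := min_add_le' (qS.p (s1, s2) * (Wch (c1 s1) (c2 s2)).p y)
          (OSLam3 qS Wch k1 s1 s2 y c1 c2) (OSLam4 qS Wch k1 s1 s2 y c1 c2) l3 l4 hAnn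
        linarith
    calc ∑ tb : K → T, ∑ c1 : S1 → X1, ∑ c2 : S2 → X2, OScbW qT qX1 qX2 k1 k2 tb c1 c2 *
          (OSG qS Wch c1 c2 (s1, s2) y * (1 - (OSdec qS Wch c1 c2 y).p (s1, s2)))
        ≤ ∑ tb : K → T, ∑ c1 : S1 → X1, ∑ c2 : S2 → X2, OScbW qT qX1 qX2 k1 k2 tb c1 c2 *
            OSH qS qT qX1 qX2 Wch k1 γ s1 s2 y (tb (k1 s1)) (c1 s1) (c2 s2) c1 c2 :=
          Finset.sum_le_sum fun tb _ => Finset.sum_le_sum fun c1 _ =>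
            Finset.sum_le_sum fun c2 _ =>
              mul_le_mul_of_nonneg_left (percode tb c1 c2)
                (OScbW_nonneg qT qX1 qX2 k1 k2 tb c1 c2)
      _ = ∑ tb : K → T, ∑ c1 : S1 → X1, ∑ c2 : S2 → X2, ∑ t, ∑ x1, ∑ x2,
            OScbW qT qX1 qX2 k1 k2 tb c1 c2 *
            (ind (tb (k1 s1) = t) * (ind (c1 s1 = x1) * (ind (c2 s2 = x2) *
              OSH qS qT qX1 qX2 Wch k1 γ s1 s2 y t x1 x2 c1 c2))) := by
          refine Finset.sum_congr rfl fun tb _ => Finset.sum_congr rfl fun c1 _ =>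
            Finset.sum_congr rfl fun c2 _ => ?_
          rw [show OSH qS qT qX1 qX2 Wch k1 γ s1 s2 y (tb (k1 s1)) (c1 s1) (c2 s2) c1 c2
            = ∑ t, ∑ x1, ∑ x2, ind (tb (k1 s1) = t) * (ind (c1 s1 = x1) *
                (ind (c2 s2 = x2) * OSH qS qT qX1 qX2 Wch k1 γ s1 s2 y t x1 x2 c1 c2))
            from (collapse3 (tb (k1 s1)) (c1 s1) (c2 s2)
              (fun t x1 x2 => OSH qS qT qX1 qX2 Wch k1 γ s1 s2 y t x1 x2 c1 c2)).symm]
          simp only [Finset.mul_sum]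
      _ = ∑ t, ∑ x1, ∑ x2, ∑ tb : K → T, ∑ c1 : S1 → X1, ∑ c2 : S2 → X2,
            OScbW qT qX1 qX2 k1 k2 tb c1 c2 *
            (ind (tb (k1 s1) = t) * (ind (c1 s1 = x1) * (ind (c2 s2 = x2) *
              OSH qS qT qX1 qX2 Wch k1 γ s1 s2 y t x1 x2 c1 c2))) := sum_swap33 _
      _ ≤ ∑ t, ∑ x1, ∑ x2, (qMAC qS qT qX1 qX2 Wch s1 s2 t x1 x2 y *
            ind (OSBad qS qT qX1 qX2 Wch k1 γ s1 s2 t x1 x2 y)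
            + 4 * ((2:ℝ)^(-γ) * qMAC qS qT qX1 qX2 Wch s1 s2 t x1 x2 y)) :=
          Finset.sum_le_sum fun t _ => Finset.sum_le_sum fun x1 _ =>
            Finset.sum_le_sum fun x2 _ =>
              OSkey qS qT qX1 qX2 Wch k1 k2 γ s1 s2 y t x1 x2 hq hk
  · have hq0 : qS.p (s1, s2) = 0 := le_antisymm (not_lt.mp hq) (qS.nonneg _)
    have hz : ∑ tb : K → T, ∑ c1 : S1 → X1, ∑ c2 : S2 → X2,
        OScbW qT qX1 qX2 k1 k2 tb c1 c2 *
        (OSG qS Wch c1 c2 (s1, s2) y * (1 - (OSdec qS Wch c1 c2 y).p (s1, s2))) = 0 :=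
      Finset.sum_eq_zero fun tb _ => Finset.sum_eq_zero fun c1 _ =>
        Finset.sum_eq_zero fun c2 _ => by
          rw [show OSG qS Wch c1 c2 (s1, s2) y
            = qS.p (s1, s2) * (Wch (c1 s1) (c2 s2)).p y from rfl, hq0]
          ring
    rw [hz]
    exact Finset.sum_nonneg fun t _ => Finset.sum_nonneg fun x1 _ =>
      Finset.sum_nonneg fun x2 _ => hRHSnn t x1 x2

lemma OSfinal (γ : ℝ) (hk : ∀ s1 s2, 0 < qS.p (s1, s2) → k1 s1 = k2 s2) :
    ∑ tb : K → T, ∑ c1 : S1 → X1, ∑ c2 : S2 → X2, OScbW qT qX1 qX2 k1 k2 tb c1 c2 *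
      pErrorMAC qS Wch (fun a => diracPMF (c1 a)) (fun b => diracPMF (c2 b))
        (fun y => OSdec qS Wch c1 c2 y)
    ≤ (∑ s1 : S1, ∑ s2 : S2, ∑ t : T, ∑ x1 : X1, ∑ x2 : X2, ∑ y : Y,
        qMAC qS qT qX1 qX2 Wch s1 s2 t x1 x2 y *
        ind (OSBad qS qT qX1 qX2 Wch k1 γ s1 s2 t x1 x2 y))
      + 4 * (2:ℝ) ^ (-γ) := by
  have e1 : ∑ tb : K → T, ∑ c1 : S1 → X1, ∑ c2 : S2 → X2,
      OScbW qT qX1 qX2 k1 k2 tb c1 c2 *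
        pErrorMAC qS Wch (fun a => diracPMF (c1 a)) (fun b => diracPMF (c2 b))
          (fun y => OSdec qS Wch c1 c2 y)
      = ∑ s1, ∑ s2, ∑ y, ∑ tb : K → T, ∑ c1 : S1 → X1, ∑ c2 : S2 → X2,
          OScbW qT qX1 qX2 k1 k2 tb c1 c2 *
          (OSG qS Wch c1 c2 (s1, s2) y * (1 - (OSdec qS Wch c1 c2 y).p (s1, s2))) := by
    refine (Finset.sum_congr rfl fun tb _ => Finset.sum_congr rfl fun c1 _ =>
      Finset.sum_congr rfl fun c2 _ => ?_).trans (sum_swap33 _)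
    rw [pError_code qS Wch c1 c2]
    simp only [Finset.mul_sum]
  have e2 : ∑ s1, ∑ s2, ∑ y, ∑ tb : K → T, ∑ c1 : S1 → X1, ∑ c2 : S2 → X2,
      OScbW qT qX1 qX2 k1 k2 tb c1 c2 *
      (OSG qS Wch c1 c2 (s1, s2) y * (1 - (OSdec qS Wch c1 c2 y).p (s1, s2)))
      ≤ ∑ s1, ∑ s2, ∑ y, ∑ t, ∑ x1, ∑ x2,
        (qMAC qS qT qX1 qX2 Wch s1 s2 t x1 x2 y *
          ind (OSBad qS qT qX1 qX2 Wch k1 γ s1 s2 t x1 x2 y)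
          + 4 * ((2:ℝ)^(-γ) * qMAC qS qT qX1 qX2 Wch s1 s2 t x1 x2 y)) :=
    Finset.sum_le_sum fun s1 _ => Finset.sum_le_sum fun s2 _ =>
      Finset.sum_le_sum fun y _ => OSblock qS qT qX1 qX2 Wch k1 k2 γ s1 s2 y
        (fun a b h => hk a b h)
  have e3 : ∑ s1, ∑ s2, ∑ y, ∑ t, ∑ x1, ∑ x2,
      (qMAC qS qT qX1 qX2 Wch s1 s2 t x1 x2 y *
        ind (OSBad qS qT qX1 qX2 Wch k1 γ s1 s2 t x1 x2 y)
        + 4 * ((2:ℝ)^(-γ) * qMAC qS qT qX1 qX2 Wch s1 s2 t x1 x2 y))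
      = (∑ s1 : S1, ∑ s2 : S2, ∑ t : T, ∑ x1 : X1, ∑ x2 : X2, ∑ y : Y,
          qMAC qS qT qX1 qX2 Wch s1 s2 t x1 x2 y *
          ind (OSBad qS qT qX1 qX2 Wch k1 γ s1 s2 t x1 x2 y))
        + 4 * (2:ℝ) ^ (-γ) := by
    have hsplit : ∑ s1, ∑ s2, ∑ y, ∑ t, ∑ x1, ∑ x2,
        (qMAC qS qT qX1 qX2 Wch s1 s2 t x1 x2 y *
          ind (OSBad qS qT qX1 qX2 Wch k1 γ s1 s2 t x1 x2 y)
          + 4 * ((2:ℝ)^(-γ) * qMAC qS qT qX1 qX2 Wch s1 s2 t x1 x2 y))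
        = (∑ s1, ∑ s2, ∑ y, ∑ t, ∑ x1, ∑ x2,
            qMAC qS qT qX1 qX2 Wch s1 s2 t x1 x2 y *
            ind (OSBad qS qT qX1 qX2 Wch k1 γ s1 s2 t x1 x2 y))
          + ∑ s1, ∑ s2, ∑ y, ∑ t, ∑ x1, ∑ x2,
            4 * ((2:ℝ)^(-γ) * qMAC qS qT qX1 qX2 Wch s1 s2 t x1 x2 y) := by
      simp only [Finset.sum_add_distrib]
    rw [hsplit]
    congr 1
    · exact Finset.sum_congr rfl fun s1 _ => Finset.sum_congr rfl fun s2 _ =>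
        (sum_swap3 _).symm
    · have h1 : ∀ (s1 : S1) (s2 : S2) (y : Y), ∑ t, ∑ x1, ∑ x2,
          4 * ((2:ℝ)^(-γ) * qMAC qS qT qX1 qX2 Wch s1 s2 t x1 x2 y)
          = (4 * (2:ℝ)^(-γ)) * ∑ t, ∑ x1, ∑ x2, qMAC qS qT qX1 qX2 Wch s1 s2 t x1 x2 y :=
        fun s1 s2 y => pull3 _ _ _ (fun t x1 x2 => by ring)
      rw [Finset.sum_congr rfl fun s1 _ => Finset.sum_congr rfl fun s2 _ =>
        Finset.sum_congr rfl fun y _ => h1 s1 s2 y]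
      rw [pull3 (4 * (2:ℝ)^(-γ)) _
        (fun s1 s2 y => ∑ t, ∑ x1, ∑ x2, qMAC qS qT qX1 qX2 Wch s1 s2 t x1 x2 y)
        (fun s1 s2 y => rfl)]
      rw [show ∑ s1, ∑ s2, ∑ y, ∑ t, ∑ x1, ∑ x2,
          qMAC qS qT qX1 qX2 Wch s1 s2 t x1 x2 y
        = ∑ s1, ∑ s2, ∑ t, ∑ x1, ∑ x2, ∑ y, qMAC qS qT qX1 qX2 Wch s1 s2 t x1 x2 y
        from Finset.sum_congr rfl fun s1 _ => Finset.sum_congr rfl fun s2 _ =>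
          (sum_swap3 _).symm]
      rw [qMAC_total qS qT qX1 qX2 Wch, mul_one]
  rw [e1]
  exact le_trans e2 (le_of_eq e3)

end MainDev4

/-- Loosened one-shot bound for joint source-channel coding over a MAC. -/
theorem oneShot_jscc_mac_loosened (qS : FinPMF (S1 × S2)) (Wch : X1 → X2 → FinPMF Y)
    (k1 : S1 → K) (k2 : S2 → K)
    (hk : ∀ s1 s2, 0 < qS.p (s1, s2) → k1 s1 = k2 s2)
    (qT : FinPMF T) (qX1 : S1 → T → FinPMF X1) (qX2 : S2 → T → FinPMF X2)
    (γ : ℝ) (hγ : 0 < γ) :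
    ∃ (enc1 : S1 → FinPMF X1) (enc2 : S2 → FinPMF X2) (dec : Y → FinPMF (S1 × S2)),
      pErrorMAC qS Wch enc1 enc2 dec ≤
        (∑ s1 : S1, ∑ s2 : S2, ∑ t : T, ∑ x1 : X1, ∑ x2 : X2, ∑ y : Y,
          qMAC qS qT qX1 qX2 Wch s1 s2 t x1 x2 y *
          ind (iYX1cX2S2T qS qT qX1 qX2 Wch y x1 x2 s2 t - hS1cS2 qS s1 s2 < γ ∨
               iYX2cX1S1T qS qT qX1 qX2 Wch y x1 x2 s1 t - hS2cS1 qS s1 s2 < γ ∨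
               iYX1X2cKT qS qT qX1 qX2 Wch k1 y x1 x2 (k1 s1) t -
                 hS1S2cK qS k1 s1 s2 < γ ∨
               iYX1X2 qS qT qX1 qX2 Wch y x1 x2 - hS1S2 qS s1 s2 < γ))
        + 4 * (2 : ℝ) ^ (-γ) := by
  classical
  obtain ⟨i, hi⟩ := exists_le_of_avg_le
    (fun i : (K → T) × ((S1 → X1) × (S2 → X2)) =>
      OScbW qT qX1 qX2 k1 k2 i.1 i.2.1 i.2.2)
    (fun i => pErrorMAC qS Wch (fun a => diracPMF (i.2.1 a)) (fun b => diracPMF (i.2.2 b))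
      (fun y => OSdec qS Wch i.2.1 i.2.2 y))
    (fun i => OScbW_nonneg qT qX1 qX2 k1 k2 i.1 i.2.1 i.2.2)
    (by
      rw [show (∑ i : (K → T) × ((S1 → X1) × (S2 → X2)),
            OScbW qT qX1 qX2 k1 k2 i.1 i.2.1 i.2.2)
          = ∑ tb : K → T, ∑ c1 : S1 → X1, ∑ c2 : S2 → X2, OScbW qT qX1 qX2 k1 k2 tb c1 c2
        from by
          rw [Fintype.sum_prod_type]
          exact Finset.sum_congr rfl fun tb _ => Fintype.sum_prod_type _]
      exact OScbW_total qT qX1 qX2 k1 k2)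
    ((∑ s1 : S1, ∑ s2 : S2, ∑ t : T, ∑ x1 : X1, ∑ x2 : X2, ∑ y : Y,
        qMAC qS qT qX1 qX2 Wch s1 s2 t x1 x2 y *
        ind (iYX1cX2S2T qS qT qX1 qX2 Wch y x1 x2 s2 t - hS1cS2 qS s1 s2 < γ ∨
             iYX2cX1S1T qS qT qX1 qX2 Wch y x1 x2 s1 t - hS2cS1 qS s1 s2 < γ ∨
             iYX1X2cKT qS qT qX1 qX2 Wch k1 y x1 x2 (k1 s1) t -
               hS1S2cK qS k1 s1 s2 < γ ∨
             iYX1X2 qS qT qX1 qX2 Wch y x1 x2 - hS1S2 qS s1 s2 < γ))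
      + 4 * (2 : ℝ) ^ (-γ))
    (by
      rw [show (∑ i : (K → T) × ((S1 → X1) × (S2 → X2)),
            OScbW qT qX1 qX2 k1 k2 i.1 i.2.1 i.2.2 *
              pErrorMAC qS Wch (fun a => diracPMF (i.2.1 a)) (fun b => diracPMF (i.2.2 b))
                (fun y => OSdec qS Wch i.2.1 i.2.2 y))
          = ∑ tb : K → T, ∑ c1 : S1 → X1, ∑ c2 : S2 → X2,
              OScbW qT qX1 qX2 k1 k2 tb c1 c2 *
              pErrorMAC qS Wch (fun a => diracPMF (c1 a)) (fun b => diracPMF (c2 b))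
                (fun y => OSdec qS Wch c1 c2 y)
        from by
          rw [Fintype.sum_prod_type]
          exact Finset.sum_congr rfl fun tb _ => Fintype.sum_prod_type _]
      exact OSfinal qS qT qX1 qX2 Wch k1 k2 γ hk)
  exact ⟨fun a => diracPMF (i.2.1 a), fun b => diracPMF (i.2.2 b),
    fun y => OSdec qS Wch i.2.1 i.2.2 y, hi⟩
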